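/- arXiv:2305.01314 — 8 statements merged into one kernel-verified Lean document; each statement's English description precedes it below -/
import Mathlib

section
/- Let G be a connected finite simple graph, let S and T be disjoint nonempty sets of vertices of G, and let k be a natural number. Then (G,S,T,k) is a yes-instance of Two-Sets Cut-Uncut if and only if there exists a partition (A,B) of V(G) with S ⊆ A, T ⊆ B and |∂(A)| ≤ k such that both induced subgraphs G[A] and G[B] are connected. -/
/-- The cut-set ∂(A): edges of `G` with exactly one endpoint in `A`. -/
def cutSet {V : Type*} (G : SimpleGraph V) (A : Set V) : Set (Sym2 V) :=
  {e | e ∈ G.edgeSet ∧ ∃ x y, e = s(x, y) ∧ x ∈ A ∧ y ∉ A}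

/-- `x` and `y` lie in the same connected component of the induced subgraph `G[A]`:
there is a walk from `x` to `y` all of whose vertices lie in `A`. -/
def ReachableIn {V : Type*} (G : SimpleGraph V) (A : Set V) (x y : V) : Prop :=
  ∃ wlk : G.Walk x y, ∀ u ∈ wlk.support, u ∈ A

/-- `(G,S,T,k)` is a yes-instance of Two-Sets Cut-Uncut. -/
def TwoSetsCutUncut {V : Type*} (G : SimpleGraph V) (S T : Set V) (k : ℕ) : Prop :=
  ∃ A B : Set V, A ∪ B = Set.univ ∧ A ∩ B = ∅ ∧ S ⊆ A ∧ T ⊆ B ∧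
    (∀ x ∈ S, ∀ y ∈ S, ReachableIn G A x y) ∧
    (∀ x ∈ T, ∀ y ∈ T, ReachableIn G B x y) ∧
    (cutSet G A).ncard ≤ k

section Aux

variable {V : Type*} {G : SimpleGraph V} {A B : Set V} {x y z : V}

lemma reachableIn_refl (hx : x ∈ A) : ReachableIn G A x x :=
  ⟨SimpleGraph.Walk.nil, by simp [hx]⟩

lemma reachableIn_symm (h : ReachableIn G A x y) : ReachableIn G A y x := by
  obtain ⟨w, hw⟩ := h
  exact ⟨w.reverse, by simpa using hw⟩

lemma reachableIn_trans (h1 : ReachableIn G A x y) (h2 : ReachableIn G A y z) :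
    ReachableIn G A x z := by
  obtain ⟨w1, hw1⟩ := h1
  obtain ⟨w2, hw2⟩ := h2
  refine ⟨w1.append w2, fun u hu => ?_⟩
  rw [SimpleGraph.Walk.mem_support_append_iff] at hu
  exact hu.elim (hw1 u) (hw2 u)

lemma reachableIn_mono (hAB : A ⊆ B) (h : ReachableIn G A x y) : ReachableIn G B x y := by
  obtain ⟨w, hw⟩ := h
  exact ⟨w, fun u hu => hAB (hw u hu)⟩

lemma reachableIn_mem_left (h : ReachableIn G A x y) : x ∈ A := by
  obtain ⟨w, hw⟩ := h; exact hw x w.start_mem_support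

lemma reachableIn_mem_right (h : ReachableIn G A x y) : y ∈ A := by
  obtain ⟨w, hw⟩ := h; exact hw y w.end_mem_support

lemma reachableIn_adj (h : ReachableIn G A x y) (hyz : G.Adj y z) (hz : z ∈ A) :
    ReachableIn G A x z := by
  obtain ⟨w, hw⟩ := h
  refine ⟨w.append (SimpleGraph.Walk.cons hyz SimpleGraph.Walk.nil), fun u hu => ?_⟩
  rw [SimpleGraph.Walk.mem_support_append_iff] at hu
  rcases hu with hu | hu
  · exact hw u hu
  · simp only [SimpleGraph.Walk.support_cons, SimpleGraph.Walk.support_nil,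
      List.mem_cons, List.mem_singleton, List.not_mem_nil, or_false] at hu
    rcases hu with rfl | rfl
    · exact hw u w.end_mem_support
    · exact hz

/-- Every vertex on a witnessing walk is reachable; hence reachability is witnessed
within the component. -/
lemma reachableIn_comp (h : ReachableIn G A x y) :
    ReachableIn G {z | ReachableIn G A x z} x y := by
  classical
  obtain ⟨w, hw⟩ := h
  refine ⟨w, fun u hu => ?_⟩
  exact ⟨(w.takeUntil u hu), fun v hv =>
    hw v (SimpleGraph.Walk.support_takeUntil_subset w hu hv)⟩

lemma induce_connected_iff :
    (G.induce A).Connected ↔ A.Nonempty ∧ ∀ x ∈ A, ∀ y ∈ A, ReachableIn G A x y := by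
  rw [SimpleGraph.connected_iff]
  constructor
  · rintro ⟨hpre, hne⟩
    obtain ⟨a, ha⟩ := (Set.nonempty_coe_sort).mp hne
    refine ⟨⟨a, ha⟩, fun x hx y hy => ?_⟩
    obtain ⟨w⟩ := hpre ⟨x, hx⟩ ⟨y, hy⟩
    refine ⟨w.map (SimpleGraph.Embedding.induce A).toHom, fun u hu => ?_⟩
    erw [SimpleGraph.Walk.support_map] at hu
    obtain ⟨⟨v, hv⟩, _, rfl⟩ := List.mem_map.mp hu
    exact hv
  · rintro ⟨⟨a, ha⟩, hreach⟩
    refine ⟨fun ⟨x, hx⟩ ⟨y, hy⟩ => ?_, ⟨⟨a, ha⟩⟩⟩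

    obtain ⟨w, hw⟩ := hreach x hx y hy
    clear hreach
    induction w with
    | nil => rfl
    | @cons u v _ huv p ih =>
      have hu : u ∈ A := hw u (by simp)
      have hv : v ∈ A := hw v (by simp)
      have h1 : (G.induce A).Adj ⟨u, hu⟩ ⟨v, hv⟩ := huv
      exact h1.reachable.trans (ih hv hy (fun z hz => hw z (by simp [hz])))

lemma reachableIn_of_walk {C : Set V} :
    ∀ {v s : V} (_ : G.Walk v s),
      (∀ ⦃x y : V⦄, G.Adj x y → x ∈ C → y ∉ C → ReachableIn G Cᶜ y s) →
      v ∈ Cᶜ → ReachableIn G Cᶜ v s := by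
  intro v s w
  induction w with
  | nil => intro _ hv; exact reachableIn_refl hv
  | @cons a b c hab p ih =>
    intro hnbr ha
    by_cases hb : b ∈ Cᶜ
    · refine reachableIn_trans ⟨SimpleGraph.Walk.cons hab SimpleGraph.Walk.nil, ?_⟩ (ih hnbr hb)
      intro u hu
      simp only [SimpleGraph.Walk.support_cons, SimpleGraph.Walk.support_nil,
        List.mem_cons, List.mem_singleton, List.not_mem_nil, or_false] at hu
      rcases hu with rfl | rfl
      exacts [ha, hb]
    · exact hnbr hab.symm (not_not.mp hb) ha

end Aux

theorem stmt0 {V : Type*} [Fintype V] (G : SimpleGraph V) (hG : G.Connected)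
    (S T : Set V) (hS : S.Nonempty) (hT : T.Nonempty) (hST : Disjoint S T) (k : ℕ) :
    TwoSetsCutUncut G S T k ↔
      ∃ A B : Set V, A ∪ B = Set.univ ∧ A ∩ B = ∅ ∧ S ⊆ A ∧ T ⊆ B ∧
        (cutSet G A).ncard ≤ k ∧
        (G.induce A).Connected ∧ (G.induce B).Connected := by
  constructor
  · rintro ⟨A, B, hUn, hInt, hSA, hTB, hSr, hTr, hcard⟩
    obtain ⟨s, hs⟩ := hS
    obtain ⟨t, ht⟩ := hT
    have hsA : s ∈ A := hSA hs
    have htB : t ∈ B := hTB ht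
    have hBAc : B ⊆ Aᶜ := fun v hv hvA => Set.eq_empty_iff_forall_notMem.mp hInt v ⟨hvA, hv⟩
    -- A₀ : component of s in A
    set A₀ : Set V := {z | ReachableIn G A s z} with hA₀def
    have hA₀A : A₀ ⊆ A := fun z hz => reachableIn_mem_right hz
    have hsA₀ : s ∈ A₀ := reachableIn_refl hsA
    have hSA₀ : S ⊆ A₀ := fun x hx => hSr s hs x hx
    -- B' := A₀ᶜ ; B₀ : component of t in B'
    have hBB' : B ⊆ A₀ᶜ := fun v hv => fun hvA₀ => hBAc hv (hA₀A hvA₀)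
    set B₀ : Set V := {z | ReachableIn G A₀ᶜ t z} with hB₀def
    have hB₀B' : B₀ ⊆ A₀ᶜ := fun z hz => reachableIn_mem_right hz
    have htB₀ : t ∈ B₀ := reachableIn_refl (hBB' htB)
    have hTB₀ : T ⊆ B₀ := fun x hx => reachableIn_mono hBB' (hTr t ht x hx)
    -- neighbor facts
    have hcutA₀ : cutSet G A₀ ⊆ cutSet G A := by
      rintro e ⟨he, x, y, rfl, hx, hy⟩
      refine ⟨he, x, y, rfl, hA₀A hx, fun hyA => hy ?_⟩
      exact reachableIn_adj hx (G.mem_edgeSet.mp he) hyA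
    have hnbrB₀ : ∀ ⦃x y⦄, G.Adj x y → x ∈ B₀ → y ∉ B₀ → y ∈ A₀ := by
      intro x y hxy hx hy
      by_contra hyA₀
      exact hy (reachableIn_adj hx hxy hyA₀)
    have hcutB₀ : cutSet G B₀ ⊆ cutSet G A₀ := by
      rintro e ⟨he, x, y, rfl, hx, hy⟩
      have hyA₀ : y ∈ A₀ := hnbrB₀ (G.mem_edgeSet.mp he) hx hy
      refine ⟨he, y, x, Sym2.eq_swap, hyA₀, fun hxA₀ => hB₀B' hx hxA₀⟩
    -- final sets
    have hA₀A' : A₀ ⊆ B₀ᶜ := fun z hz hzB₀ => hB₀B' hzB₀ hz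
    -- connectivity of G[B₀ᶜ]
    have hreachA' : ∀ v ∈ B₀ᶜ, ReachableIn G B₀ᶜ v s := by
      have hnbr : ∀ ⦃x y : V⦄, G.Adj x y → x ∈ B₀ → y ∉ B₀ → ReachableIn G B₀ᶜ y s := by
        intro x y hxy hx hy
        have hyA₀ : y ∈ A₀ := hnbrB₀ hxy hx hy
        exact reachableIn_mono hA₀A' (reachableIn_symm (reachableIn_comp hyA₀))
      intro v hv
      obtain ⟨w⟩ := hG.preconnected v s
      exact reachableIn_of_walk w hnbr hv
    refine ⟨B₀ᶜ, B₀, by simp, by simp, fun x hx => hA₀A' (hSA₀ hx), hTB₀, ?_, ?_, ?_⟩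
    · -- cut bound
      have h1 : cutSet G B₀ᶜ ⊆ cutSet G A := by
        intro e he
        apply hcutA₀ (hcutB₀ ?_)
        obtain ⟨hee, x, y, rfl, hx, hy⟩ := he
        exact ⟨hee, y, x, Sym2.eq_swap, not_not.mp hy, hx⟩
      calc (cutSet G B₀ᶜ).ncard ≤ (cutSet G A).ncard :=
            Set.ncard_le_ncard h1 (Set.toFinite _)
        _ ≤ k := hcard
    · -- G[B₀ᶜ] connected
      rw [induce_connected_iff]
      refine ⟨⟨s, hA₀A' hsA₀⟩, fun x hx y hy => ?_⟩
      exact reachableIn_trans (hreachA' x hx) (reachableIn_symm (hreachA' y hy))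
    · -- G[B₀] connected
      rw [induce_connected_iff]
      refine ⟨⟨t, htB₀⟩, fun x hx y hy => ?_⟩
      have hx' : ReachableIn G B₀ t x := reachableIn_comp hx
      have hy' : ReachableIn G B₀ t y := reachableIn_comp hy
      exact reachableIn_trans (reachableIn_symm hx') hy'
  · rintro ⟨A, B, hUn, hInt, hSA, hTB, hcard, hAc, hBc⟩
    rw [induce_connected_iff] at hAc hBc
    exact ⟨A, B, hUn, hInt, hSA, hTB,
      fun x hx y hy => hAc.2 x (hSA hx) y (hSA hy),
      fun x hx y hy => hBc.2 x (hTB hx) y (hTB hy), hcard⟩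
end

section
/- If there exists a feasible s-t-path of length ℓ, then the polynomial f(C_ℓ) is a nonzero polynomial. -/
/-- `w` is an `s`-`t`-walk of length `ℓ` in `G` (indexed by `Fin (ℓ+1)`). -/
def IsWalk {V : Type*} (G : SimpleGraph V) (s t : V) {ℓ : ℕ} (w : Fin (ℓ + 1) → V) : Prop :=
  w 0 = s ∧ w (Fin.last ℓ) = t ∧ ∀ i : Fin ℓ, G.Adj (w i.castSucc) (w i.succ)

/-- `w` is a feasible `s`-`t`-walk: its labels sum to `c`, and it meets each `X i`
in at most one index. -/
def Feasible {V : Type*} (G : SimpleGraph V) (s t : V) {d p : ℕ}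
    (g : Sym2 V → (Fin d → ZMod 2)) (c : Fin d → ZMod 2)
    (X : Fin p → Set V) {ℓ : ℕ} (w : Fin (ℓ + 1) → V) : Prop :=
  IsWalk G s t w ∧
  (∑ i : Fin ℓ, g s(w i.castSucc, w i.succ)) = c ∧
  ∀ i : Fin p, ∀ j j' : Fin (ℓ + 1), w j ∈ X i → w j' ∈ X i → j = j'

/-- The monomial `f(W)` of a walk: the product (with multiplicity) of the variables
of the traversed edges. -/
noncomputable def walkMono {V : Type*} (F : Type*) [Field F] {ℓ : ℕ}
    (w : Fin (ℓ + 1) → V) : MvPolynomial (Sym2 V) F :=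
  ∏ i : Fin ℓ, MvPolynomial.X s(w i.castSucc, w i.succ)

/-- The polynomial `f(C_ℓ)`: the sum of `f(W)` over all feasible `s`-`t`-walks of
length `ℓ`. -/
noncomputable def polyC {V : Type*} [Fintype V] (F : Type*) [Field F]
    (G : SimpleGraph V) (s t : V) {d p : ℕ}
    (g : Sym2 V → (Fin d → ZMod 2)) (c : Fin d → ZMod 2)
    (X : Fin p → Set V) (ℓ : ℕ) : MvPolynomial (Sym2 V) F :=
  ∑ᶠ w ∈ {w : Fin (ℓ + 1) → V | Feasible G s t g c X w}, walkMono F w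

lemma walkMono_eq_monomial {V : Type*} (F : Type*) [Field F] {ℓ : ℕ}
    (w : Fin (ℓ + 1) → V) :
    walkMono F w = MvPolynomial.monomial
      (∑ i : Fin ℓ, Finsupp.single s(w i.castSucc, w i.succ) 1) (1 : F) := by
  rw [walkMono, MvPolynomial.monomial_sum_one]
  rfl

lemma walk_unique {V : Type*} (G : SimpleGraph V) (s t : V) {ℓ : ℕ}
    (w w' : Fin (ℓ + 1) → V) (hw : IsWalk G s t w) (hw' : IsWalk G s t w')
    (hpath : Function.Injective w)
    (hsum : (∑ i : Fin ℓ, Finsupp.single s(w' i.castSucc, w' i.succ) (1 : ℕ)) =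
            ∑ i : Fin ℓ, Finsupp.single s(w i.castSucc, w i.succ) 1) :
    w' = w := by
  classical
  set E : Fin ℓ → Sym2 V := fun i => s(w i.castSucc, w i.succ) with hE
  set E' : Fin ℓ → Sym2 V := fun i => s(w' i.castSucc, w' i.succ) with hE'
  have hE_inj : Function.Injective E := by
    intro i j hij
    rw [hE, Sym2.eq_iff] at hij
    rcases hij with ⟨h1, _⟩ | ⟨h1, h2⟩
    · have := hpath h1
      exact Fin.castSucc_inj.mp this
    · have e1 := congrArg Fin.val (hpath h1)
      have e2 := congrArg Fin.val (hpath h2)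
      simp [Fin.val_succ] at e1 e2
      omega
  have hcount : ∀ a : Sym2 V,
      (∑ i : Fin ℓ, (if E' i = a then 1 else 0)) =
      ∑ i : Fin ℓ, (if E i = a then (1 : ℕ) else 0) := by
    intro a
    have := DFunLike.congr_fun hsum a
    simpa [Finsupp.finset_sum_apply, Finsupp.single_apply] using this
  have hle : ∀ a : Sym2 V, (∑ i : Fin ℓ, (if E i = a then (1 : ℕ) else 0)) ≤ 1 := by
    intro a
    have : (∑ i : Fin ℓ, (if E i = a then (1 : ℕ) else 0)) =
        (Finset.univ.filter fun i => E i = a).card := by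
      rw [Finset.card_filter]
    rw [this]
    apply Finset.card_le_one.mpr
    intro x hx y hy
    simp only [Finset.mem_filter] at hx hy
    exact hE_inj (hx.2.trans hy.2.symm)
  have hex : ∀ i : Fin ℓ, ∃ j : Fin ℓ, E j = E' i := by
    intro i
    by_contra hcon
    push_neg at hcon
    have h0 : (∑ j : Fin ℓ, (if E j = E' i then (1 : ℕ) else 0)) = 0 :=
      Finset.sum_eq_zero fun j _ => if_neg (hcon j)
    have h1 : (1 : ℕ) ≤ ∑ j : Fin ℓ, (if E' j = E' i then (1 : ℕ) else 0) := by
      have := Finset.single_le_sum (f := fun j => if E' j = E' i then (1 : ℕ) else 0)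
        (fun j _ => Nat.zero_le _) (Finset.mem_univ i)
      simpa using this
    rw [hcount (E' i), h0] at h1
    omega
  have hE'_inj : Function.Injective E' := by
    intro i j hij
    by_contra hne
    have h2 : (2 : ℕ) ≤ ∑ k : Fin ℓ, (if E' k = E' j then (1 : ℕ) else 0) := by
      have hsub : ({i, j} : Finset (Fin ℓ)) ⊆ Finset.univ := Finset.subset_univ _
      have := Finset.sum_le_sum_of_subset (f := fun k => if E' k = E' j then (1 : ℕ) else 0) hsub
      rw [Finset.sum_pair hne] at this
      simpa [hij] using this
    rw [hcount (E' j)] at h2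
    have := hle (E' j)
    omega
  have key : ∀ n : ℕ, ∀ h : n < ℓ + 1, w' ⟨n, h⟩ = w ⟨n, h⟩ := by
    intro n
    induction n using Nat.strong_induction_on with
    | _ n IH =>
      match n with
      | 0 =>
        intro h
        have h0 : (⟨0, h⟩ : Fin (ℓ + 1)) = 0 := rfl
        rw [h0, hw'.1, hw.1]
      | m + 1 =>
        intro h
        have hm : m < ℓ := by omega
        set i : Fin ℓ := ⟨m, hm⟩ with hi
        have hics : i.castSucc = (⟨m, by omega⟩ : Fin (ℓ + 1)) := rfl
        have hisc : i.succ = (⟨m + 1, h⟩ : Fin (ℓ + 1)) := rfl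
        have hEi : E' i = s(w ⟨m, by omega⟩, w' ⟨m + 1, h⟩) := by
          rw [hE']
          simp only [hics, hisc]
          rw [IH m (by omega) (by omega)]
        obtain ⟨j, hj⟩ := hex i
        have hj2 : s(w j.castSucc, w j.succ) = s(w ⟨m, by omega⟩, w' ⟨m + 1, h⟩) := by
          rw [← hEi]; exact hj
        rw [Sym2.eq_iff] at hj2
        rcases hj2 with ⟨h1, h2⟩ | ⟨h1, h2⟩
        · have hjc := hpath h1
          have hjv : (j : ℕ) = m := congrArg Fin.val hjc
          have : j.succ = (⟨m + 1, h⟩ : Fin (ℓ + 1)) := by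
            apply Fin.ext; simp [Fin.val_succ, hjv]
          rw [this] at h2
          exact h2.symm
        · -- w j.castSucc = w' ⟨m+1⟩ and w j.succ = w ⟨m⟩, so j.val + 1 = m
          have hjv : (j : ℕ) + 1 = m := by
            have := congrArg Fin.val (hpath h2)
            simpa [Fin.val_succ] using this
          have hEj : E' j = E j := by
            rw [hE', hE]
            have c1 : w' j.castSucc = w j.castSucc := by
              have := IH j (by omega) (by omega)
              convert this using 2 <;> rfl
            have c2 : w' j.succ = w j.succ := by
              have := IH (j + 1) (by omega) (by omega)
              convert this using 2 <;> rfl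
            show s(w' j.castSucc, w' j.succ) = s(w j.castSucc, w j.succ)
            rw [c1, c2]
          have : j = i := hE'_inj (hEj.trans hj)
          have := congrArg Fin.val this
          simp [hi] at this
          omega
  funext j
  have := key j.1 j.2
  simpa using this

theorem stmt2 {V : Type*} [Fintype V] (G : SimpleGraph V) (s t : V) (hst : s ≠ t)
    (d p : ℕ) (g : Sym2 V → (Fin d → ZMod 2)) (c : Fin d → ZMod 2)
    (X : Fin p → Set V) (F : Type*) [Field F] [CharP F 2] (ℓ : ℕ)
    (w : Fin (ℓ + 1) → V) (hw : Feasible G s t g c X w)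
    (hpath : Function.Injective w) :
    polyC F G s t g c X ℓ ≠ 0 := by
  classical
  set m : Sym2 V →₀ ℕ := ∑ i : Fin ℓ, Finsupp.single s(w i.castSucc, w i.succ) 1 with hm
  have hfin : {w : Fin (ℓ + 1) → V | Feasible G s t g c X w}.Finite := Set.toFinite _
  have hc : MvPolynomial.coeff m (polyC F G s t g c X ℓ) = 1 := by
    rw [polyC, finsum_mem_eq_finite_toFinset_sum _ hfin, MvPolynomial.coeff_sum]
    rw [Finset.sum_eq_single w]
    · rw [walkMono_eq_monomial, MvPolynomial.coeff_monomial, if_pos rfl]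
    · intro b hb hne
      rw [walkMono_eq_monomial, MvPolynomial.coeff_monomial, if_neg]
      intro heq
      exact hne (walk_unique G s t w b hw.1 ((hfin.mem_toFinset.mp hb).1) hpath heq)
    · intro hnot
      exact absurd (hfin.mem_toFinset.mpr hw) hnot
  intro h0
  rw [h0] at hc
  simp at hc
end

section
/- There exists a feasible s-t-path if and only if there exists a natural number ℓ with f(C_ℓ) ≠ 0; moreover, when these hold, the minimum length of a feasible s-t-path equals the smallest ℓ such that f(C_ℓ) is a nonzero polynomial. -/
open scoped Classical

namespace StmtAux

variable {V : Type*}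

/-- Edge list of a vertex list. -/
def eL : List V → List (Sym2 V)
  | a :: b :: r => s(a, b) :: eL (b :: r)
  | _ => []

@[simp] lemma eL_nil : eL ([] : List V) = [] := rfl
@[simp] lemma eL_single (a : V) : eL [a] = [] := rfl
@[simp] lemma eL_cons_cons (a b : V) (r : List V) :
    eL (a :: b :: r) = s(a, b) :: eL (b :: r) := rfl

lemma length_eL : ∀ l : List V, (eL l).length = l.length - 1
  | [] => rfl
  | [_] => rfl
  | a :: b :: r => by
    rw [eL_cons_cons, List.length_cons, length_eL (b :: r)]
    simp

lemma eL_append_cons : ∀ (l₁ : List V) (a : V) (l₂ : List V),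
    eL (l₁ ++ a :: l₂) = eL (l₁ ++ [a]) ++ eL (a :: l₂)
  | [], a, l₂ => rfl
  | [x], a, l₂ => rfl
  | x :: y :: r, a, l₂ => by
    have := eL_append_cons (y :: r) a l₂
    simp only [List.cons_append, eL_cons_cons] at *
    rw [this]

lemma eL_concat : ∀ (l : List V) (h : l ≠ []) (a : V),
    eL (l ++ [a]) = eL l ++ [s(l.getLast h, a)]
  | [], h, a => absurd rfl h
  | [x], _, a => rfl
  | x :: y :: r, _, a => by
    have := eL_concat (y :: r) (by simp) a
    simp only [List.cons_append, eL_cons_cons] at *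
    rw [this]
    simp [List.getLast_cons]

lemma eL_reverse : ∀ l : List V, eL l.reverse = (eL l).reverse
  | [] => rfl
  | [x] => rfl
  | x :: y :: r => by
    have h1 : (x :: y :: r).reverse = (y :: r).reverse ++ [x] := by simp
    rw [h1, eL_concat _ (by simp) x, eL_reverse (y :: r)]
    simp [List.getLast_reverse, Sym2.eq_swap]

lemma mem_eL_endpoints : ∀ (l : List V) (e : Sym2 V), e ∈ eL l → ∀ v ∈ e, v ∈ l
  | [], e, he, v, hv => by simp [eL] at he
  | [x], e, he, v, hv => by simp [eL] at he
  | x :: y :: r, e, he, v, hv => by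
    rw [eL_cons_cons, List.mem_cons] at he
    rcases he with he | he
    · subst he
      rcases Sym2.mem_iff.mp hv with h | h <;> simp [h]
    · have := mem_eL_endpoints (y :: r) e he v hv
      simp only [List.mem_cons] at this ⊢
      tauto

lemma exists_edge_of_mem : ∀ (l : List V) (_ : 2 ≤ l.length) (v : V) (_ : v ∈ l),
    ∃ e ∈ eL l, v ∈ e
  | x :: y :: r, _, v, hv => by
    rcases List.mem_cons.mp hv with h | hv'
    · exact ⟨s(x, y), by simp, by simp [h]⟩
    · rcases r with _ | ⟨z, r'⟩
      · simp only [List.mem_singleton] at hv'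
        exact ⟨s(x, y), by simp, by simp [hv']⟩
      · obtain ⟨e, he, hve⟩ := exists_edge_of_mem (y :: z :: r') (by simp) v hv'
        exact ⟨e, by rw [eL_cons_cons]; exact List.mem_cons_of_mem _ he, hve⟩

lemma nodup_eL : ∀ l : List V, l.Nodup → (eL l).Nodup
  | [], _ => List.nodup_nil
  | [x], _ => List.nodup_nil
  | x :: y :: r, h => by
    rw [eL_cons_cons, List.nodup_cons]
    refine ⟨fun hmem => ?_, nodup_eL (y :: r) (List.Nodup.of_cons h)⟩
    have hx : x ∉ y :: r := (List.nodup_cons.mp h).1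
    exact hx (mem_eL_endpoints (y :: r) _ hmem x (by simp))

/-- Uniqueness: a trail with the same head and the same edge multiset as a
vertex-nodup list equals that list. -/
lemma eq_of_eL_perm : ∀ (l l' : List V), l.Nodup → l'.head? = l.head? →
    (eL l').Perm (eL l) → l' = l
  | [], l', _, hh, _ => by
    simpa using (List.head?_eq_none_iff.mp (by simpa using hh))
  | [a], l', _, hh, hp => by
    have h0 : eL l' = [] := List.Perm.eq_nil (by simpa using hp)
    cases l' with
    | nil => simp at hh
    | cons x l'' =>
      cases l'' with
      | nil => simpa using hh
      | cons y r => simp at h0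
  | a :: b :: r, l', hnd, hh, hp => by
    cases l' with
    | nil => simp at hh
    | cons x l'' =>
      simp only [List.head?_cons, Option.some_inj] at hh
      have hh' : a = x := hh.symm
      subst hh'
      cases l'' with
      | nil =>
        have := hp.length_eq
        simp at this
      | cons c r' =>
        have hmem : s(a, c) ∈ eL (a :: b :: r) := hp.mem_iff.mp (by simp)
        have hcb : c = b := by
          rw [eL_cons_cons, List.mem_cons] at hmem
          rcases hmem with h | h
          · rcases Sym2.eq_iff.mp h with ⟨_, h⟩ | ⟨h1, h2⟩
            · exact h
            · exact absurd (show a ∈ b :: r by rw [h1]; exact List.mem_cons_self)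
                (List.nodup_cons.mp hnd).1
          · exfalso
            have : a ∉ (b :: r) := (List.nodup_cons.mp hnd).1
            exact this (mem_eL_endpoints (b :: r) _ h a (by simp))
        cases hcb
        have hp' : (eL (b :: r')).Perm (eL (b :: r)) := by
          rw [eL_cons_cons, eL_cons_cons] at hp
          exact hp.cons_inv
        have := eq_of_eL_perm (b :: r) (b :: r') (List.Nodup.of_cons hnd) rfl hp'
        rw [this]

section Counting

variable [Fintype V]

/-- All lists over `V` of a given length, as a `Finset`. -/
noncomputable def listsLen (V : Type*) [Fintype V] : ℕ → Finset (List V)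
  | 0 => {[]}
  | n + 1 => Finset.univ.biUnion fun a : V => (listsLen V n).image (List.cons a)

lemma mem_listsLen (n : ℕ) (l : List V) : l ∈ listsLen V n ↔ l.length = n := by
  induction n generalizing l with
  | zero => simp [listsLen, List.length_eq_zero_iff]
  | succ n ih =>
    cases l with
    | nil =>
      simp only [listsLen, Finset.mem_biUnion, Finset.mem_image, Finset.mem_univ, true_and]
      constructor
      · rintro ⟨a, x, -, h⟩; simp at h
      · intro h; simp at h
    | cons a r =>
      simp only [listsLen, Finset.mem_biUnion, Finset.mem_image, Finset.mem_univ, true_and,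
        List.cons.injEq, List.length_cons]
      constructor
      · rintro ⟨b, x, hx, rfl, rfl⟩
        rw [(ih x).mp hx]
      · intro h
        exact ⟨a, r, (ih r).mpr (by omega), rfl, rfl⟩

/-- The finset of all `s`-`t` trails (walk lists) with edge multiset exactly `M`. -/
noncomputable def trailsF (G : SimpleGraph V) (M : Multiset (Sym2 V)) (s t : V) :
    Finset (List V) :=
  (listsLen V (Multiset.card M + 1)).filter
    (fun l => l.head? = some s ∧ l.getLast? = some t ∧ l.Chain' G.Adj ∧
      (↑(eL l) : Multiset (Sym2 V)) = M)

lemma mem_trailsF {G : SimpleGraph V} {M : Multiset (Sym2 V)} {s t : V} {l : List V} :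
    l ∈ trailsF G M s t ↔ l.head? = some s ∧ l.getLast? = some t ∧ l.Chain' G.Adj ∧
      (↑(eL l) : Multiset (Sym2 V)) = M := by
  rw [trailsF, Finset.mem_filter, mem_listsLen]
  constructor
  · tauto
  · intro h
    refine ⟨?_, h⟩
    have hne : l ≠ [] := by
      intro e
      rw [e] at h
      simp at h
    have hM : Multiset.card M = (eL l).length := by
      rw [← h.2.2.2, Multiset.coe_card]
    rw [hM, length_eL]
    have : 1 ≤ l.length := List.length_pos_iff.mpr hne
    omega

end Counting

section Palindrome

variable {G : SimpleGraph V}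

lemma count_eL_even_of_palindrome_aux :
    ∀ (n : ℕ) (l : List V), l.length ≤ n → l.Chain' G.Adj → l.reverse = l →
      ∀ e, 2 ∣ (eL l).count e := by
  intro n
  induction n with
  | zero =>
    intro l hl _ _ e
    have : l = [] := List.length_eq_zero_iff.mp (by omega)
    simp [this]
  | succ n ih =>
    intro l hl hc hp e
    rcases l with _ | ⟨a, r⟩
    · simp
    rcases eq_or_ne r [] with rfl | hr
    · simp
    have hlast : (a :: r).getLast? = some a := by
      conv_lhs => rw [← hp]
      rw [List.getLast?_reverse]
      rfl
    have hrlast : r.getLast hr = a := by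
      have h1 : (a :: r).getLast (List.cons_ne_nil _ _) = r.getLast hr :=
        List.getLast_cons hr
      have h2 : (a :: r).getLast? = some ((a :: r).getLast (List.cons_ne_nil _ _)) :=
        List.getLast?_eq_getLast _
      rw [hlast] at h2
      rw [← h1, ← Option.some_inj, ← h2]
    set m := r.dropLast with hm
    have hrm : r = m ++ [a] := by
      rw [hm, ← hrlast]
      exact (List.dropLast_append_getLast hr).symm
    have hmp : m.reverse = m := by
      have h0 : (a :: r).reverse = a :: (m.reverse ++ [a]) := by
        rw [hrm]
        simp
      rw [hp, hrm] at h0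
      have h2 : m ++ [a] = m.reverse ++ [a] := List.cons_injective h0
      exact (List.append_inj_left' h2.symm rfl)
    rcases m with _ | ⟨b, m'⟩
    · exfalso
      simp only [List.nil_append] at hrm
      rw [hrm] at hc
      exact G.loopless.irrefl a (List.isChain_cons_cons.mp hc).1
    · have hmlast : (b :: m').getLast (List.cons_ne_nil _ _) = b := by
        have h2 : (b :: m').getLast? = some ((b :: m').getLast (List.cons_ne_nil _ _)) :=
          List.getLast?_eq_getLast _
        have h3 : (b :: m').getLast? = some b := by
          conv_lhs => rw [← hmp]
          rw [List.getLast?_reverse]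
          rfl
        rw [h3] at h2
        exact (Option.some_inj.mp h2).symm
      have hswap : s(b, a) = s(a, b) := Sym2.eq_swap
      have hsplit : eL (a :: r) = s(a, b) :: (eL (b :: m') ++ [s(a, b)]) := by
        rw [hrm]
        have h4 : eL ((b :: m') ++ [a]) = eL (b :: m') ++ [s(b, a)] := by
          rw [eL_concat (b :: m') (List.cons_ne_nil _ _) a, hmlast]
        calc eL (a :: ((b :: m') ++ [a])) = s(a, b) :: eL ((b :: m') ++ [a]) := by
              simp [eL_cons_cons]
          _ = s(a, b) :: (eL (b :: m') ++ [s(a, b)]) := by rw [h4, hswap]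
      have hcm : (b :: m').Chain' G.Adj := by
        have h1 : (r : List V).Chain' G.Adj := hc.tail
        rw [hrm] at h1
        exact h1.left_of_append
      have hcount := ih (b :: m') (by
        have : r.length = m'.length + 2 := by rw [hrm]; simp
        simp only [List.length_cons] at hl ⊢
        omega) hcm hmp e
      rcases hcount with ⟨q, hq⟩
      rw [hsplit]
      simp only [List.count_cons, List.count_append, List.count_singleton', List.count_nil,
        beq_iff_eq]
      rw [hq]
      split_ifs <;> omega

lemma count_eL_even_of_palindrome (l : List V) (hc : l.Chain' G.Adj) (hp : l.reverse = l)
    (e : Sym2 V) : 2 ∣ (eL l).count e :=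
  count_eL_even_of_palindrome_aux l.length l le_rfl hc hp e

variable [Fintype V]

lemma closed_even (G : SimpleGraph V) (M : Multiset (Sym2 V)) (a : V)
    (h : ¬ 2 ∣ (trailsF G M a a).card) (e : Sym2 V) : 2 ∣ M.count e := by
  by_contra he
  apply h
  have hsum : ∑ _l ∈ trailsF G M a a, (1 : ZMod 2) = 0 := by
    refine Finset.sum_involution (fun l _ => l.reverse) (fun l _ => by decide)
      (fun l hl _ => ?_) (fun l hl => ?_) (fun l hl => List.reverse_reverse l)
    · rw [mem_trailsF] at hl
      intro hrev
      apply he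
      have hc : M.count e = (eL l).count e := by
        rw [← hl.2.2.2, Multiset.coe_count]
      rw [hc]
      exact count_eL_even_of_palindrome l hl.2.2.1 hrev e
    · rw [mem_trailsF] at hl ⊢
      refine ⟨by rw [List.head?_reverse]; exact hl.2.1,
        by rw [List.getLast?_reverse]; exact hl.1, ?_, ?_⟩
      · rw [List.Chain', List.isChain_reverse]
        exact hl.2.2.1.imp fun x y hxy => hxy.symm
      · rw [eL_reverse, Multiset.coe_reverse]
        exact hl.2.2.2
  have hcard : ((trailsF G M a a).card : ZMod 2) = 0 := by
    rw [← hsum, Finset.sum_const, nsmul_one]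
  exact (ZMod.natCast_eq_zero_iff _ 2).mp hcard

end Palindrome

section Split

/-- The maximal suffix of `l` containing no `s`. -/
noncomputable def sTail (s : V) (l : List V) : List V :=
  (l.reverse.takeWhile (fun v => decide (v ≠ s))).reverse

/-- The prefix of `l` up to (and including) the last occurrence of `s`. -/
noncomputable def sHead (s : V) (l : List V) : List V :=
  (l.reverse.dropWhile (fun v => decide (v ≠ s))).reverse

lemma sHead_append_sTail (s : V) (l : List V) : sHead s l ++ sTail s l = l := by
  rw [sHead, sTail, ← List.reverse_append, List.takeWhile_append_dropWhile,
    List.reverse_reverse]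

lemma not_mem_sTail (s : V) (l : List V) : s ∉ sTail s l := by
  intro h
  rw [sTail, List.mem_reverse] at h
  have := List.mem_takeWhile_imp h
  simp at this

lemma dropWhile_ne_of_mem :
    ∀ (s : V) (r : List V), s ∈ r →
      ∃ r', r.dropWhile (fun v => decide (v ≠ s)) = s :: r'
  | s, a :: r, h => by
    by_cases ha : a = s
    · subst ha
      exact ⟨r, by rw [List.dropWhile_cons, if_neg (by simp)]⟩
    · have hs : s ∈ r := by
        rcases List.mem_cons.mp h with h' | h'
        · exact absurd h'.symm ha
        · exact h'
      obtain ⟨r', hr'⟩ := dropWhile_ne_of_mem s r hs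
      exact ⟨r', by rw [List.dropWhile_cons, if_pos (by simp [ha]), hr']⟩

lemma sHead_getLast? (s : V) (l : List V) (h : s ∈ l) :
    (sHead s l).getLast? = some s ∧ sHead s l ≠ [] := by
  obtain ⟨r', hr'⟩ := dropWhile_ne_of_mem s l.reverse (List.mem_reverse.mpr h)
  rw [sHead, hr']
  constructor
  · rw [List.reverse_cons, List.getLast?_concat]
  · simp

lemma takeWhile_append_all {α : Type*} (p : α → Bool) (xs ys : List α)
    (h : ∀ x ∈ xs, p x = true) :
    (xs ++ ys).takeWhile p = xs ++ ys.takeWhile p := by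
  induction xs with
  | nil => simp
  | cons a r ih =>
    rw [List.cons_append, List.takeWhile_cons, if_pos (h a (by simp))]
    rw [ih fun x hx => h x (by simp [hx])]
    rfl

lemma dropWhile_append_all {α : Type*} (p : α → Bool) (xs ys : List α)
    (h : ∀ x ∈ xs, p x = true) :
    (xs ++ ys).dropWhile p = ys.dropWhile p := by
  induction xs with
  | nil => simp
  | cons a r ih =>
    rw [List.cons_append, List.dropWhile_cons, if_pos (h a (by simp))]
    exact ih fun x hx => h x (by simp [hx])

lemma getLast?_cons_ne_nil {α : Type*} (a : α) (l : List α) (h : l ≠ []) :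
    (a :: l).getLast? = l.getLast? := by
  cases l with
  | nil => exact absurd rfl h
  | cons b r => exact List.getLast?_cons_cons

lemma sHead_sTail_of_append (s : V) (A B : List V) (hA : A.getLast? = some s)
    (hB : s ∉ B) : sHead s (A ++ B) = A ∧ sTail s (A ++ B) = B := by
  obtain ⟨A', hA'⟩ : ∃ A', A.reverse = s :: A' := by
    have h1 : A.reverse.head? = some s := by rw [List.head?_reverse]; exact hA
    cases h2 : A.reverse with
    | nil => rw [h2] at h1; simp at h1
    | cons x r =>
      rw [h2] at h1
      simp only [List.head?_cons, Option.some_inj] at h1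
      exact ⟨r, by rw [h1]⟩
  have hall : ∀ x ∈ B.reverse, (fun v => decide (v ≠ s)) x = true := by
    intro x hx
    simp only [decide_eq_true_eq]
    intro hxs
    exact hB (by rw [← hxs]; exact List.mem_reverse.mp hx)
  have hrev : (A ++ B).reverse = B.reverse ++ A.reverse := by simp
  constructor
  · rw [sHead, hrev, dropWhile_append_all _ _ _ hall, hA', List.dropWhile_cons,
      if_neg (by simp), ← hA', List.reverse_reverse]
  · rw [sTail, hrev, takeWhile_append_all _ _ _ hall, hA', List.takeWhile_cons,
      if_neg (by simp)]
    simp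

lemma eL_split_at (s : V) (A B : List V) (hA : A.getLast? = some s) :
    eL (A ++ B) = eL A ++ eL (s :: B) := by
  have hAne : A ≠ [] := by rintro rfl; simp at hA
  have hA2 : A = A.dropLast ++ [s] := by
    have h2 : A.getLast hAne = s := by
      have := List.getLast?_eq_getLast hAne
      rw [hA] at this
      exact (Option.some_inj.mp this).symm
    conv_lhs => rw [← List.dropLast_append_getLast hAne]
    rw [h2]
  calc eL (A ++ B) = eL (A.dropLast ++ (s :: B)) := by
        conv_lhs => rw [hA2]
        rw [List.append_assoc]
        rfl
    _ = eL (A.dropLast ++ [s]) ++ eL (s :: B) := eL_append_cons _ _ _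
    _ = eL A ++ eL (s :: B) := by rw [← hA2]

end Split

section KeyLemma

variable [Fintype V] {G : SimpleGraph V}

/-- Trails which avoid `s` after the start. -/
noncomputable def aTrails (G : SimpleGraph V) (M2 : Multiset (Sym2 V)) (s t : V) :
    Finset (List V) :=
  (trailsF G M2 s t).filter (fun B => s ∉ B.tail)

/-- Facts about splitting a trail at the last occurrence of `s`. -/
lemma trail_split {M : Multiset (Sym2 V)} {s t : V} {l : List V} (hst : s ≠ t)
    (hl : l ∈ trailsF G M s t) :
    sTail s l ≠ [] ∧
    (s :: sTail s l) ∈ aTrails G (↑(eL (s :: sTail s l))) s t ∧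
    sHead s l ∈ trailsF G (M - ↑(eL (s :: sTail s l))) s s ∧
    (↑(eL (s :: sTail s l)) : Multiset (Sym2 V)) ≤ M := by
  rw [mem_trailsF] at hl
  obtain ⟨hhead, hlast, hchain, hedges⟩ := hl
  have hsl : s ∈ l := List.mem_of_mem_head? (by rw [hhead]; rfl)
  obtain ⟨hAlast, hAne⟩ := sHead_getLast? s l hsl
  set A := sHead s l with hA
  set Bt := sTail s l with hBt
  have hsplit : A ++ Bt = l := sHead_append_sTail s l
  have hBtne : Bt ≠ [] := by
    intro h
    rw [h, List.append_nil] at hsplit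
    rw [← hsplit] at hlast
    rw [hAlast] at hlast
    exact hst (Option.some_inj.mp hlast)
  have hheadA : A.head? = some s := by
    have : l.head? = A.head? := by
      rw [← hsplit, List.head?_append]
      cases h : A.head? with
      | none => exact absurd (List.head?_eq_none_iff.mp h) hAne
      | some x => rfl
    rw [← this, hhead]
  have hlastBt : Bt.getLast? = some t := by
    rw [← hsplit, List.getLast?_append] at hlast
    cases h : Bt.getLast? with
    | none => exact absurd (List.getLast?_eq_none_iff.mp h) hBtne
    | some x => rw [h] at hlast; exact hlast
  have hchainsplit := List.isChain_append.mp (hsplit ▸ hchain)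
  have hchainA : A.Chain' G.Adj := hchainsplit.1
  have hchainBt : Bt.Chain' G.Adj := hchainsplit.2.1
  have hglue : ∀ y ∈ Bt.head?, G.Adj s y := by
    intro y hy
    exact hchainsplit.2.2 s (by rw [hAlast]; rfl) y hy
  have hchainsBt : (s :: Bt).Chain' G.Adj := List.isChain_cons.mpr ⟨hglue, hchainBt⟩
  have heLsplit : (↑(eL l) : Multiset (Sym2 V)) = ↑(eL A) + ↑(eL (s :: Bt)) := by
    rw [← hsplit, eL_split_at s A Bt hAlast]
    exact (Multiset.coe_add _ _).symm
  have hle : (↑(eL (s :: Bt)) : Multiset (Sym2 V)) ≤ M := by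
    rw [← hedges, heLsplit]; exact le_add_self
  have hsub : (↑(eL A) : Multiset (Sym2 V)) = M - ↑(eL (s :: Bt)) := by
    rw [← hedges, heLsplit, add_tsub_cancel_right]
  refine ⟨hBtne, ?_, ?_, hle⟩
  · rw [aTrails, Finset.mem_filter, mem_trailsF]
    refine ⟨⟨rfl, ?_, hchainsBt, rfl⟩, ?_⟩
    · rw [getLast?_cons_ne_nil s Bt hBtne]
      exact hlastBt
    · exact not_mem_sTail s l
  · rw [mem_trailsF]
    exact ⟨hheadA, hAlast, hchainA, hsub⟩

/-- The fiber over a given suffix-edge-multiset is a product. -/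
lemma card_fiber_eq (M M2 : Multiset (Sym2 V)) (s t : V) (hst : s ≠ t) (hM2 : M2 ≤ M) :
    ((trailsF G M s t).filter
        (fun l => (↑(eL (s :: sTail s l)) : Multiset (Sym2 V)) = M2)).card
      = (aTrails G M2 s t).card * (trailsF G (M - M2) s s).card := by
  rw [← Finset.card_product]
  apply Finset.card_nbij' (i := fun l => (s :: sTail s l, sHead s l))
    (j := fun q => q.2 ++ q.1.tail)
  · intro l hl
    rw [Finset.mem_coe, Finset.mem_filter] at hl
    obtain ⟨hlT, hφ⟩ := hl
    obtain ⟨hBtne, hBmem, hAmem, hle⟩ := trail_split hst hlT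
    rw [Finset.mem_coe, Finset.mem_product]
    rw [hφ] at hBmem hAmem
    exact ⟨hBmem, hAmem⟩
  · rintro ⟨B, A⟩ hq
    rw [Finset.mem_coe, Finset.mem_product] at hq
    obtain ⟨hB, hA⟩ := hq
    rw [aTrails, Finset.mem_filter, mem_trailsF] at hB
    obtain ⟨⟨hBhead, hBlast, hBchain, hBedges⟩, hBs⟩ := hB
    rw [mem_trailsF] at hA
    obtain ⟨hAhead, hAlast, hAchain, hAedges⟩ := hA
    obtain ⟨Bt, rfl⟩ : ∃ Bt, B = s :: Bt := by
      cases B with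
      | nil => simp at hBhead
      | cons x r =>
        simp only [List.head?_cons, Option.some_inj] at hBhead
        exact ⟨r, by rw [hBhead]⟩
    simp only [List.tail_cons]
    have hBtne : Bt ≠ [] := by
      rintro rfl
      simp only [List.getLast?_singleton, Option.some_inj] at hBlast
      exact hst hBlast
    have hBts : s ∉ Bt := by simpa using hBs
    have hBtlast : Bt.getLast? = some t := by
      rw [getLast?_cons_ne_nil s Bt hBtne] at hBlast
      exact hBlast
    have hglue : ∀ y ∈ Bt.head?, G.Adj s y := (List.isChain_cons.mp hBchain).1
    rw [Finset.mem_coe, Finset.mem_filter, mem_trailsF]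
    have hAne : A ≠ [] := by
      rintro rfl
      simp at hAhead
    have hedges' : (↑(eL (A ++ Bt)) : Multiset (Sym2 V)) = M := by
      rw [eL_split_at s A Bt hAlast, ← Multiset.coe_add, hAedges, hBedges,
        tsub_add_cancel_of_le hM2]
    have hst' := sHead_sTail_of_append s A Bt hAlast hBts
    refine ⟨⟨?_, ?_, ?_, hedges'⟩, ?_⟩
    · rw [List.head?_append, hAhead]
      rfl
    · rw [List.getLast?_append, hBtlast]
      rfl
    · rw [List.Chain', List.isChain_append]
      refine ⟨hAchain, (List.isChain_cons.mp hBchain).2, ?_⟩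
      intro x hx y hy
      rw [hAlast] at hx
      simp only [Option.mem_def, Option.some_inj] at hx
      rw [← hx]
      exact hglue y hy
    · rw [hst'.2, hBedges]
  · intro l hl
    rw [Finset.mem_coe, Finset.mem_filter] at hl
    simp only [List.tail_cons]
    exact sHead_append_sTail s l
  · rintro ⟨B, A⟩ hq
    rw [Finset.mem_coe, Finset.mem_product] at hq
    obtain ⟨hB, hA⟩ := hq
    rw [aTrails, Finset.mem_filter, mem_trailsF] at hB
    obtain ⟨⟨hBhead, hBlast, hBchain, hBedges⟩, hBs⟩ := hB
    rw [mem_trailsF] at hA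
    obtain ⟨hAhead, hAlast, hAchain, hAedges⟩ := hA
    obtain ⟨Bt, rfl⟩ : ∃ Bt, B = s :: Bt := by
      cases B with
      | nil => simp at hBhead
      | cons x r =>
        simp only [List.head?_cons, Option.some_inj] at hBhead
        exact ⟨r, by rw [hBhead]⟩
    have hBts : s ∉ Bt := by simpa using hBs
    have hst' := sHead_sTail_of_append s A Bt hAlast hBts
    simp only [List.tail_cons]
    rw [hst'.1, hst'.2]

lemma aTrails_shape {M2 : Multiset (Sym2 V)} {s t : V} {B : List V} (hst : s ≠ t)
    (hB : B ∈ aTrails G M2 s t) : ∃ u rest, B = s :: u :: rest := by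
  rw [aTrails, Finset.mem_filter, mem_trailsF] at hB
  obtain ⟨⟨hBhead, hBlast, _, _⟩, _⟩ := hB
  obtain ⟨Bt, rfl⟩ : ∃ Bt, B = s :: Bt := by
    cases B with
    | nil => simp at hBhead
    | cons x r =>
      simp only [List.head?_cons, Option.some_inj] at hBhead
      exact ⟨r, by rw [hBhead]⟩
  cases Bt with
  | nil =>
    simp only [List.getLast?_singleton, Option.some_inj] at hBlast
    exact absurd hBlast hst
  | cons u rest => exact ⟨u, rest, rfl⟩

lemma aTrails_step {M2 : Multiset (Sym2 V)} {s t u : V} (hst : s ≠ t)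
    (hodd : ¬ 2 ∣ ((aTrails G M2 s t).filter (fun B => B.tail.head? = some u)).card) :
    G.Adj s u ∧ s(s, u) ∈ M2 ∧ (∀ f ∈ M2.erase s(s, u), s ∉ f) ∧
      ¬ 2 ∣ (trailsF G (M2.erase s(s, u)) u t).card := by
  have hne : ((aTrails G M2 s t).filter (fun B => B.tail.head? = some u)).Nonempty := by
    rw [Finset.nonempty_iff_ne_empty]
    intro h
    exact hodd (by rw [h]; exact Dvd.intro 0 rfl)
  obtain ⟨B0, hB0⟩ := hne
  rw [Finset.mem_filter] at hB0
  obtain ⟨hB0a, hB0u⟩ := hB0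
  obtain ⟨u0, rest0, rfl⟩ := aTrails_shape hst hB0a
  simp only [List.tail_cons, List.head?_cons, Option.some_inj] at hB0u
  have hB0u' := hB0u.symm
  subst hB0u'
  rw [aTrails, Finset.mem_filter, mem_trailsF] at hB0a
  obtain ⟨⟨hB0head, hB0last, hB0chain, hB0edges⟩, hB0s⟩ := hB0a
  have hadj : G.Adj s u := by
    have := (List.isChain_cons.mp hB0chain).1 u rfl
    exact this
  have hM2eq : M2 = s(s, u) ::ₘ (↑(eL (u :: rest0)) : Multiset (Sym2 V)) := by
    rw [← hB0edges, eL_cons_cons, ← Multiset.cons_coe]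
  have heM2 : s(s, u) ∈ M2 := by rw [hM2eq]; exact Multiset.mem_cons_self _ _
  have herase : M2.erase s(s, u) = (↑(eL (u :: rest0)) : Multiset (Sym2 V)) := by
    rw [hM2eq, Multiset.erase_cons_head]
  have hsfree : ∀ f ∈ M2.erase s(s, u), s ∉ f := by
    intro f hf hsf
    rw [herase, Multiset.mem_coe] at hf
    have : s ∈ u :: rest0 := mem_eL_endpoints (u :: rest0) f hf s hsf
    exact hB0s (by simpa using this)
  refine ⟨hadj, heM2, hsfree, ?_⟩
  have hcard : ((aTrails G M2 s t).filter (fun B => B.tail.head? = some u)).card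
      = (trailsF G (M2.erase s(s, u)) u t).card := by
    apply Finset.card_nbij' (i := fun B => B.tail) (j := fun B' => s :: B')
    · intro B hB
      rw [Finset.mem_coe, Finset.mem_filter] at hB
      obtain ⟨hBa, hBu⟩ := hB
      obtain ⟨u1, rest1, rfl⟩ := aTrails_shape hst hBa
      simp only [List.tail_cons, List.head?_cons, Option.some_inj] at hBu
      have hBu' := hBu.symm
      subst hBu'
      rw [aTrails, Finset.mem_filter, mem_trailsF] at hBa
      obtain ⟨⟨hBhead, hBlast, hBchain, hBedges⟩, hBs⟩ := hBa
      rw [Finset.mem_coe]; simp only [List.tail_cons]; rw [mem_trailsF]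
      refine ⟨rfl, ?_, (List.isChain_cons.mp hBchain).2, ?_⟩
      · rw [getLast?_cons_ne_nil s _ (by simp)] at hBlast
        exact hBlast
      · rw [← hBedges, eL_cons_cons, ← Multiset.cons_coe, Multiset.erase_cons_head]
    · intro B' hB'
      rw [Finset.mem_coe, mem_trailsF] at hB'
      obtain ⟨hBhead', hBlast', hBchain', hBedges'⟩ := hB'
      obtain ⟨rest', rfl⟩ : ∃ rest', B' = u :: rest' := by
        cases B' with
        | nil => simp at hBhead'
        | cons x r =>
          simp only [List.head?_cons, Option.some_inj] at hBhead'
          exact ⟨r, by rw [hBhead']⟩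
      have hsB' : s ∉ u :: rest' := by
        intro hs
        rcases rest' with _ | ⟨y, r2⟩
        · simp only [List.mem_singleton] at hs
          exact (G.ne_of_adj hadj) hs
        · obtain ⟨f, hf, hsf⟩ := exists_edge_of_mem (u :: y :: r2) (by simp) s hs
          have hfm : f ∈ M2.erase s(s, u) := by
            rw [← hBedges', Multiset.mem_coe]
            exact hf
          exact hsfree f hfm hsf
      rw [Finset.mem_coe, Finset.mem_filter, aTrails, Finset.mem_filter, mem_trailsF]
      refine ⟨⟨⟨rfl, ?_, ?_, ?_⟩, by simpa using hsB'⟩, rfl⟩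
      · rw [getLast?_cons_ne_nil s _ (by simp)]
        exact hBlast'
      · exact List.isChain_cons.mpr ⟨fun y hy => by
          simp only [List.head?_cons, Option.mem_def, Option.some_inj] at hy
          rw [← hy]; exact hadj, hBchain'⟩
      · rw [eL_cons_cons, ← Multiset.cons_coe, hBedges', Multiset.cons_erase heM2]
    · intro B hB
      rw [Finset.mem_coe, Finset.mem_filter] at hB
      obtain ⟨u1, rest1, rfl⟩ := aTrails_shape hst hB.1
      rfl
    · intro B' _
      rfl
  rw [← hcard]
  exact hodd

lemma key (G : SimpleGraph V) : ∀ (n : ℕ) (M : Multiset (Sym2 V)), Multiset.card M ≤ n →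
    ∀ s t : V, s ≠ t → ¬ 2 ∣ (trailsF G M s t).card →
    ∃ P : List V, P.head? = some s ∧ P.getLast? = some t ∧ P.Chain' G.Adj ∧ P.Nodup ∧
      ∀ e, (eL P).count e = M.count e % 2 := by
  intro n
  induction n with
  | zero =>
    intro M hM s t hst hodd
    exfalso
    apply hodd
    have hM0 : M = 0 := Multiset.card_eq_zero.mp (by omega)
    have : trailsF G M s t = ∅ := by
      rw [Finset.eq_empty_iff_forall_notMem]
      intro l hl
      rw [mem_trailsF] at hl
      obtain ⟨h1, h2, _, h4⟩ := hl
      have he : eL l = [] := by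
        rw [hM0] at h4
        exact (Multiset.coe_eq_zero _).mp h4
      cases l with
      | nil => simp at h1
      | cons a r =>
        cases r with
        | nil =>
          simp only [List.head?_cons, Option.some_inj] at h1
          simp only [List.getLast?_singleton, Option.some_inj] at h2
          exact hst (h1 ▸ h2 ▸ rfl)
        | cons b r' => simp [eL_cons_cons] at he
    rw [this]
    exact Dvd.intro 0 rfl
  | succ n ih =>
    intro M hM s t hst hodd
    classical
    set φ : List V → Multiset (Sym2 V) := fun l => (↑(eL (s :: sTail s l)) : Multiset (Sym2 V))
      with hφ
    have hfib := Finset.card_eq_sum_card_fiberwise (f := φ) (s := trailsF G M s t)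
      (t := (trailsF G M s t).image φ) (fun x hx => Finset.mem_image_of_mem φ hx)
    obtain ⟨M2, hM2im, hfodd⟩ : ∃ M2 ∈ (trailsF G M s t).image φ,
        ¬ 2 ∣ ((trailsF G M s t).filter (fun l => φ l = M2)).card := by
      by_contra hcon
      push_neg at hcon
      exact hodd (hfib ▸ Finset.dvd_sum hcon)
    obtain ⟨l0, hl0T, hl0φ⟩ := Finset.mem_image.mp hM2im
    have hM2le : M2 ≤ M := by
      rw [← hl0φ]
      exact (trail_split hst hl0T).2.2.2
    rw [card_fiber_eq M M2 s t hst hM2le] at hfodd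
    have hsplit2 : ¬ 2 ∣ (aTrails G M2 s t).card ∧ ¬ 2 ∣ (trailsF G (M - M2) s s).card := by
      constructor <;> (intro h; apply hfodd)
      · exact Dvd.dvd.mul_right h _
      · exact Dvd.dvd.mul_left h _
    have heven : ∀ f, 2 ∣ (M - M2).count f := closed_even G (M - M2) s hsplit2.2
    have hfib2 := Finset.card_eq_sum_card_fiberwise (f := fun B : List V => B.tail.head?)
      (s := aTrails G M2 s t) (t := (Finset.univ : Finset (Option V)))
      (fun x _ => Finset.mem_univ _)
    obtain ⟨o, _, hoodd⟩ : ∃ o ∈ (Finset.univ : Finset (Option V)),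
        ¬ 2 ∣ ((aTrails G M2 s t).filter (fun B : List V => B.tail.head? = o)).card := by
      by_contra hcon
      push_neg at hcon
      exact hsplit2.1 (hfib2 ▸ Finset.dvd_sum hcon)
    obtain ⟨u, rfl⟩ : ∃ u, o = some u := by
      cases o with
      | none =>
        exfalso
        apply hoodd
        have : (aTrails G M2 s t).filter (fun B => B.tail.head? = none) = ∅ := by
          rw [Finset.eq_empty_iff_forall_notMem]
          intro B hB
          rw [Finset.mem_filter] at hB
          obtain ⟨u1, rest1, rfl⟩ := aTrails_shape hst hB.1
          simp at hB
        rw [this]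
        simp
      | some u => exact ⟨u, rfl⟩
    obtain ⟨hadj, heM2, hsfree, hrec⟩ := aTrails_step hst hoodd
    set e : Sym2 V := s(s, u) with he
    have hMcount : ∀ f, M.count f = (M - M2).count f + ((M2.erase e).count f +
        if f = e then 1 else 0) := by
      intro f
      have h1 : M = (M - M2) + M2 := (tsub_add_cancel_of_le hM2le).symm
      have h2 : M2 = e ::ₘ M2.erase e := (Multiset.cons_erase heM2).symm
      have h3 : Multiset.count f M = Multiset.count f (M - M2) + Multiset.count f M2 := by
        conv_lhs => rw [h1]
        rw [Multiset.count_add]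
      have h4 : Multiset.count f M2 = Multiset.count f (M2.erase e) + if f = e then 1 else 0 := by
        conv_lhs => rw [h2]
        rw [Multiset.count_cons]
      rw [h3, h4]
    have hcard' : Multiset.card (M2.erase e) ≤ n := by
      have h1 : Multiset.card M2 ≤ Multiset.card M := Multiset.card_le_card hM2le
      have h2 : Multiset.card (M2.erase e) = Multiset.card M2 - 1 := by
        rw [Multiset.card_erase_of_mem heM2]
        rfl
      omega
    rcases eq_or_ne u t with rfl | hut
    · -- u = t : take the single-edge path [s, t]
      have heven2 : ∀ f, 2 ∣ (M2.erase e).count f := closed_even G _ u hrec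
      refine ⟨[s, u], rfl, rfl, ?_, by simp [hst], ?_⟩
      · exact List.isChain_pair.mpr hadj
      · intro f
        have h3 := hMcount f
        obtain ⟨q1, hq1⟩ := heven f
        obtain ⟨q2, hq2⟩ := heven2 f
        have h4 : eL [s, u] = [e] := rfl
        rw [h4]
        rcases eq_or_ne f e with hfe | hfe
        · rw [hfe] at h3 hq1 hq2 ⊢
          rw [if_pos rfl] at h3
          have h5 : List.count e [e] = 1 := by simp
          omega
        · rw [if_neg hfe] at h3
          have h5 : List.count f [e] = 0 := List.count_eq_zero.mpr (by simp [hfe])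
          omega
    · -- u ≠ t : recurse
      obtain ⟨P', hP'head, hP'last, hP'chain, hP'nodup, hP'count⟩ :=
        ih (M2.erase e) hcard' u t hut hrec
      have hP'ne : P' ≠ [] := by
        rintro rfl
        simp at hP'head
      have hsP' : s ∉ P' := by
        intro hs
        rcases P' with _ | ⟨x, r⟩
        · simp at hP'head
        · rcases r with _ | ⟨y, r2⟩
          · simp only [List.head?_cons, Option.some_inj] at hP'head
            simp only [List.getLast?_singleton, Option.some_inj] at hP'last
            exact hut (hP'head ▸ hP'last)
          · obtain ⟨f, hf, hsf⟩ := exists_edge_of_mem (x :: y :: r2) (by simp) s hs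
            have hc1 : 0 < (eL (x :: y :: r2)).count f := List.count_pos_iff.mpr hf
            rw [hP'count f] at hc1
            have hc2 : 0 < (M2.erase e).count f := by omega
            exact hsfree f (Multiset.count_pos.mp hc2) hsf
      obtain ⟨rest', rfl⟩ : ∃ rest', P' = u :: rest' := by
        cases P' with
        | nil => simp at hP'head
        | cons x r =>
          simp only [List.head?_cons, Option.some_inj] at hP'head
          exact ⟨r, by rw [hP'head]⟩
      refine ⟨s :: u :: rest', rfl, ?_, ?_, ?_, ?_⟩
      · rw [getLast?_cons_ne_nil s _ (by simp)]
        exact hP'last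
      · exact List.isChain_cons.mpr ⟨fun y hy => by
          simp only [List.head?_cons, Option.mem_def, Option.some_inj] at hy
          rw [← hy]; exact hadj, hP'chain⟩
      · exact List.nodup_cons.mpr ⟨hsP', hP'nodup⟩
      · intro f
        have hPe0 : List.count e (eL (u :: rest')) = 0 := by
          rw [List.count_eq_zero]
          intro hmem
          exact hsP' (mem_eL_endpoints _ e hmem s (by rw [he]; simp))
        have h3 := hMcount f
        obtain ⟨q1, hq1⟩ := heven f
        have h5 : eL (s :: u :: rest') = e :: eL (u :: rest') := by rw [eL_cons_cons]
        rw [h5]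
        have h6 := hP'count f
        have h7 : List.count f (e :: eL (u :: rest')) =
            List.count f (eL (u :: rest')) + if f = e then 1 else 0 := by
          rcases eq_or_ne f e with hfe | hfe
          · rw [hfe]
            simp [List.count_cons]
          · simp [List.count_cons, beq_iff_eq, hfe, (Ne.symm hfe : ¬ e = f)]
        rw [h7]
        rcases eq_or_ne f e with hfe | hfe
        · rw [hfe] at h3 h6 hq1 ⊢
          rw [if_pos rfl] at h3 ⊢
          rw [hPe0] at h6 ⊢
          omega
        · rw [if_neg hfe] at h3 ⊢
          omega

end KeyLemma

section Bridge

/-- Degree of a vertex in an edge (as `Sym2`). -/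
noncomputable def edeg (e : Sym2 V) (v : V) : ℕ :=
  Sym2.lift ⟨fun a b => (if a = v then 1 else 0) + (if b = v then 1 else 0),
    fun a b => by ring⟩ e

@[simp] lemma edeg_mk (a b v : V) :
    edeg s(a, b) v = (if a = v then 1 else 0) + (if b = v then 1 else 0) :=
  Sym2.lift_mk _ a b

lemma mem_of_edeg_pos {e : Sym2 V} {v : V} (h : 0 < edeg e v) : v ∈ e := by
  induction e with
  | _ a b =>
    rw [edeg_mk] at h
    rcases eq_or_ne a v with rfl | ha
    · simp
    rcases eq_or_ne b v with rfl | hb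
    · simp
    rw [if_neg ha, if_neg hb] at h
    omega

/-- The handshake identity along a walk list. -/
lemma two_mul_count_list : ∀ (l : List V) (v : V),
    2 * l.count v = ((eL l).map (fun e => edeg e v)).sum
      + (if l.head? = some v then 1 else 0) + (if l.getLast? = some v then 1 else 0)
  | [], v => by simp
  | [a], v => by
    simp only [eL_single, List.map_nil, List.sum_nil, List.head?_cons,
      List.getLast?_singleton, List.count_cons, List.count_nil, beq_iff_eq, Option.some_inj]
    rcases eq_or_ne a v with rfl | ha
    · simp
    · simp [ha, Ne.symm ha]
  | a :: b :: r, v => by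
    have ih := two_mul_count_list (b :: r) v
    have hlast : (a :: b :: r).getLast? = (b :: r).getLast? := List.getLast?_cons_cons
    rw [eL_cons_cons, List.map_cons, List.sum_cons, hlast]
    have hcount : (a :: b :: r).count v = (b :: r).count v + if a = v then 1 else 0 := by
      rw [List.count_cons]
      simp [beq_iff_eq]
    have hhead : (b :: r).head? = some b := rfl
    rw [hhead] at ih
    have hh2 : ((a :: b :: r) : List V).head? = some a := rfl
    rw [hh2, hcount, edeg_mk]
    have h1 : (if some b = some v then 1 else 0) = (if b = v then 1 else 0) := by
      simp
    have h2 : (if some a = some v then 1 else 0) = (if a = v then 1 else 0) := by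
      simp
    rw [h1] at ih
    rw [h2]
    omega

variable [Fintype V]

lemma msum_eq_sum_univ {A : Type*} [AddCommMonoid A] (M : Multiset (Sym2 V))
    (gg : Sym2 V → A) : (M.map gg).sum = ∑ e ∈ Finset.univ, M.count e • gg e := by
  rw [Finset.sum_multiset_map_count]
  apply Finset.sum_subset (Finset.subset_univ _)
  intro e _ he
  rw [Multiset.mem_toFinset] at he
  rw [Multiset.count_eq_zero_of_notMem he, zero_smul]

lemma nsmul_mod_two {A : Type*} [AddCommMonoid A] (x : A) (hx : x + x = 0) (n : ℕ) :
    n • x = (n % 2) • x := by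
  conv_lhs => rw [← Nat.div_add_mod n 2, add_smul]
  have h1 : (2 * (n / 2)) • x = (n / 2) • (2 • x) := mul_nsmul x 2 (n / 2)
  rw [h1, two_nsmul, hx, smul_zero, zero_add]

lemma count_ofFn {α : Type*} [BEq α] [LawfulBEq α] {n : ℕ} (f : Fin n → α) (x : α) :
    List.count x (List.ofFn f) = ∑ i : Fin n, if f i = x then 1 else 0 := by
  induction n with
  | zero => simp
  | succ n ih =>
    rw [List.ofFn_succ, List.count_cons, Fin.sum_univ_succ, ih]
    simp only [beq_iff_eq]
    omega

lemma getElem_eL : ∀ (l : List V) (i : ℕ) (h : i < (eL l).length),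
    (eL l)[i] = s(l[i]'(by rw [length_eL] at h; omega),
      l[i + 1]'(by rw [length_eL] at h; omega))
  | a :: b :: r, 0, h => rfl
  | a :: b :: r, (i+1), h => by
    have h' : i < (eL (b :: r)).length := by
      rw [eL_cons_cons] at h
      simpa using h
    show (s(a, b) :: eL (b :: r))[i + 1] = _
    exact (List.getElem_cons_succ ..).trans (getElem_eL (b :: r) i h')

lemma eL_ofFn {ℓ : ℕ} (w : Fin (ℓ + 1) → V) :
    eL (List.ofFn w) = List.ofFn (fun i : Fin ℓ => s(w i.castSucc, w i.succ)) := by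
  apply List.ext_getElem
  · rw [length_eL]
    simp
  · intro i h1 h2
    rw [getElem_eL, List.getElem_ofFn, List.getElem_ofFn, List.getElem_ofFn]
    exact congrArg₂ (fun x y => s(x, y)) (congrArg w (Fin.ext rfl)) (congrArg w (Fin.ext rfl))

lemma head?_ofFn {ℓ : ℕ} (w : Fin (ℓ + 1) → V) : (List.ofFn w).head? = some (w 0) := by
  rw [List.ofFn_succ]
  rfl

lemma getLast?_ofFn {ℓ : ℕ} (w : Fin (ℓ + 1) → V) :
    (List.ofFn w).getLast? = some (w (Fin.last ℓ)) := by
  rw [List.getLast?_eq_getElem?, List.getElem?_eq_getElem (by simp)]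
  congr 1
  rw [List.getElem_ofFn]
  congr 1
  simp [List.length_ofFn, Fin.last]

lemma chain'_ofFn_iff {G : SimpleGraph V} {ℓ : ℕ} (w : Fin (ℓ + 1) → V) :
    (List.ofFn w).Chain' G.Adj ↔ ∀ i : Fin ℓ, G.Adj (w i.castSucc) (w i.succ) := by
  rw [List.Chain', List.isChain_iff_getElem]
  have hlen : (List.ofFn w).length = ℓ + 1 := List.length_ofFn
  constructor
  · intro h i
    have hi : (i : ℕ) + 1 < (List.ofFn w).length := by
      rw [hlen]
      simpa using i.isLt
    have h2 := h i.val hi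
    simp only [List.get_eq_getElem, List.getElem_ofFn] at h2
    have e1 : w ⟨(i : ℕ), by have := i.isLt; omega⟩ = w i.castSucc :=
      congrArg w (Fin.ext rfl)
    have e2 : w ⟨(i : ℕ) + 1, by have := i.isLt; omega⟩ = w i.succ :=
      congrArg w (Fin.ext rfl)
    rw [e1, e2] at h2
    exact h2
  · intro h i hi
    rw [hlen] at hi
    have h2 := h ⟨i, by omega⟩
    have e1 : w (Fin.castSucc ⟨i, by omega⟩) = w ⟨i, by omega⟩ := congrArg w (Fin.ext rfl)
    have e2 : w (Fin.succ ⟨i, by omega⟩) = w ⟨i + 1, by omega⟩ := congrArg w (Fin.ext rfl)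
    rw [e1, e2] at h2
    simp only [List.getElem_ofFn]
    exact h2

lemma isWalk_iff_list {G : SimpleGraph V} {s t : V} {ℓ : ℕ} (w : Fin (ℓ + 1) → V) :
    IsWalk G s t w ↔ ((List.ofFn w).head? = some s ∧ (List.ofFn w).getLast? = some t ∧
      (List.ofFn w).Chain' G.Adj) := by
  rw [IsWalk, head?_ofFn, getLast?_ofFn, chain'_ofFn_iff]
  simp

lemma card_filter_mem_eq_sum_counts {m : ℕ} (w : Fin m → V) (S : Set V) :
    (Finset.univ.filter fun j => w j ∈ S).card
      = ∑ v ∈ Finset.univ.filter (· ∈ S), List.count v (List.ofFn w) := by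
  rw [Finset.card_filter]
  have h1 : ∀ v, List.count v (List.ofFn w) = ∑ j : Fin m, if w j = v then 1 else 0 :=
    fun v => count_ofFn w v
  calc (∑ j : Fin m, if w j ∈ S then 1 else 0)
      = ∑ j : Fin m, ∑ v ∈ Finset.univ.filter (· ∈ S), (if w j = v then 1 else 0) := by
        apply Finset.sum_congr rfl
        intro j _
        rw [Finset.sum_filter]
        have : ∀ v, ((if v ∈ S then if w j = v then (1:ℕ) else 0 else 0))
            = if w j = v then (if v ∈ S then 1 else 0) else 0 := by
          intro v
          by_cases h1' : v ∈ S <;> by_cases h2 : w j = v <;> simp [h1', h2]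
        simp_rw [this]
        rw [Finset.sum_ite_eq Finset.univ (w j) (fun v => if v ∈ S then 1 else 0)]
        simp only [Finset.mem_univ, if_pos]
      _ = ∑ v ∈ Finset.univ.filter (· ∈ S), ∑ j : Fin m, (if w j = v then 1 else 0) :=
        Finset.sum_comm
      _ = _ := by
        apply Finset.sum_congr rfl
        intro v _
        rw [h1 v]

end Bridge

section Main

variable [Fintype V] {G : SimpleGraph V} {s t : V} {d p : ℕ}
  (g : Sym2 V → (Fin d → ZMod 2)) (c : Fin d → ZMod 2) (X : Fin p → Set V)

lemma pi_add_self (x : Fin d → ZMod 2) : x + x = 0 := by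
  funext k
  have h : x k + x k = 0 := CharTwo.add_self_eq_zero (x k)
  simpa using h

lemma gsum_eq {ℓ : ℕ} (w : Fin (ℓ + 1) → V) :
    (∑ i : Fin ℓ, g s(w i.castSucc, w i.succ))
      = ((↑(eL (List.ofFn w)) : Multiset (Sym2 V)).map g).sum := by
  rw [eL_ofFn, Multiset.map_coe, List.map_ofFn, Multiset.sum_coe, List.sum_ofFn]
  rfl

lemma xcond_iff {ℓ : ℕ} (w : Fin (ℓ + 1) → V) (i : Fin p) :
    (∀ j j' : Fin (ℓ + 1), w j ∈ X i → w j' ∈ X i → j = j') ↔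
      (∑ v ∈ Finset.univ.filter (· ∈ X i), List.count v (List.ofFn w)) ≤ 1 := by
  rw [← card_filter_mem_eq_sum_counts, Finset.card_le_one]
  constructor
  · intro h a ha b hb
    rw [Finset.mem_filter] at ha hb
    exact h a b ha.2 hb.2
  · intro h j j' hj hj'
    exact h j (by simp [hj]) j' (by simp [hj'])

lemma feasible_iff_list {ℓ : ℕ} (w : Fin (ℓ + 1) → V) :
    Feasible G s t g c X w ↔ IsWalk G s t w ∧
      ((↑(eL (List.ofFn w)) : Multiset (Sym2 V)).map g).sum = c ∧
      ∀ i : Fin p, (∑ v ∈ Finset.univ.filter (· ∈ X i), List.count v (List.ofFn w)) ≤ 1 := by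
  rw [Feasible, gsum_eq g w]
  exact and_congr Iff.rfl (and_congr Iff.rfl (forall_congr' fun i => xcond_iff X w i))

lemma count_eq_of_same (l l' : List V) (hh : l.head? = l'.head?)
    (hl : l.getLast? = l'.getLast?)
    (hM : (↑(eL l) : Multiset (Sym2 V)) = ↑(eL l')) (v : V) : l.count v = l'.count v := by
  have h1 := two_mul_count_list l v
  have h2 := two_mul_count_list l' v
  have h3 : ((eL l).map (fun e => edeg e v)).sum = ((eL l').map (fun e => edeg e v)).sum := by
    have h4 : (Multiset.map (fun e => edeg e v) (↑(eL l) : Multiset (Sym2 V))).sum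
        = (Multiset.map (fun e => edeg e v) (↑(eL l') : Multiset (Sym2 V))).sum := by
      rw [hM]
    rwa [Multiset.map_coe, Multiset.map_coe, Multiset.sum_coe, Multiset.sum_coe] at h4
  rw [hh, hl] at h1
  omega

lemma feasible_congr {ℓ : ℕ} (w w' : Fin (ℓ + 1) → V) (hw' : IsWalk G s t w')
    (hM : (↑(eL (List.ofFn w)) : Multiset (Sym2 V)) = ↑(eL (List.ofFn w')))
    (hfw : Feasible G s t g c X w) : Feasible G s t g c X w' := by
  rw [feasible_iff_list] at hfw ⊢
  have hwalk := hfw.1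
  have hcnt : ∀ v, (List.ofFn w).count v = (List.ofFn w').count v := by
    intro v
    apply count_eq_of_same
    · rw [head?_ofFn, head?_ofFn, hwalk.1, hw'.1]
    · rw [getLast?_ofFn, getLast?_ofFn, hwalk.2.1, hw'.2.1]
    · exact hM
  refine ⟨hw', by rw [← hM]; exact hfw.2.1, fun i => ?_⟩
  have hle := hfw.2.2 i
  have heq : ∑ v ∈ Finset.univ.filter (· ∈ X i), List.count v (List.ofFn w')
      = ∑ v ∈ Finset.univ.filter (· ∈ X i), List.count v (List.ofFn w) :=
    Finset.sum_congr rfl fun v _ => (hcnt v).symm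
  rw [heq]
  exact hle

lemma path_feasible {ℓ ℓ' : ℕ} (w : Fin (ℓ + 1) → V) (hfw : Feasible G s t g c X w)
    (wP : Fin (ℓ' + 1) → V) (hwP : IsWalk G s t wP)
    (hcnt : ∀ f, (eL (List.ofFn wP)).count f
      = (↑(eL (List.ofFn w)) : Multiset (Sym2 V)).count f % 2) :
    Feasible G s t g c X wP := by
  rw [feasible_iff_list] at hfw ⊢
  have hcnt' : ∀ f, (↑(eL (List.ofFn wP)) : Multiset (Sym2 V)).count f
      = (↑(eL (List.ofFn w)) : Multiset (Sym2 V)).count f % 2 := by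
    intro f
    rw [Multiset.coe_count]
    exact hcnt f
  refine ⟨hwP, ?_, fun i => ?_⟩
  · have hsum : ((↑(eL (List.ofFn wP)) : Multiset (Sym2 V)).map g).sum
        = ((↑(eL (List.ofFn w)) : Multiset (Sym2 V)).map g).sum := by
      rw [msum_eq_sum_univ, msum_eq_sum_univ]
      apply Finset.sum_congr rfl
      intro e _
      rw [hcnt' e]
      exact (nsmul_mod_two (g e) (pi_add_self (g e))
        ((↑(eL (List.ofFn w)) : Multiset (Sym2 V)).count e)).symm
    rw [hsum]
    exact hfw.2.1
  · have hq := hfw.2.2 i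
    have h2 : ∀ v, 2 * (List.ofFn wP).count v ≤ 2 * (List.ofFn w).count v := by
      intro v
      have hP := two_mul_count_list (List.ofFn wP) v
      have hW := two_mul_count_list (List.ofFn w) v
      have hhd : (List.ofFn wP).head? = (List.ofFn w).head? := by
        rw [head?_ofFn, head?_ofFn, hwP.1, hfw.1.1]
      have hlt : (List.ofFn wP).getLast? = (List.ofFn w).getLast? := by
        rw [getLast?_ofFn, getLast?_ofFn, hwP.2.1, hfw.1.2.1]
      have hdeg : ((eL (List.ofFn wP)).map (fun e => edeg e v)).sum
          ≤ ((eL (List.ofFn w)).map (fun e => edeg e v)).sum := by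
        have e1 : ((eL (List.ofFn wP)).map (fun e => edeg e v)).sum
            = ((↑(eL (List.ofFn wP)) : Multiset (Sym2 V)).map (fun e => edeg e v)).sum := by
          rw [Multiset.map_coe, Multiset.sum_coe]
        have e2 : ((eL (List.ofFn w)).map (fun e => edeg e v)).sum
            = ((↑(eL (List.ofFn w)) : Multiset (Sym2 V)).map (fun e => edeg e v)).sum := by
          rw [Multiset.map_coe, Multiset.sum_coe]
        rw [e1, e2, msum_eq_sum_univ, msum_eq_sum_univ]
        apply Finset.sum_le_sum
        intro e _
        have := hcnt' e
        have hmle : (↑(eL (List.ofFn wP)) : Multiset (Sym2 V)).count e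
            ≤ (↑(eL (List.ofFn w)) : Multiset (Sym2 V)).count e := by
          rw [this]
          exact Nat.mod_le _ _
        simp only [smul_eq_mul]
        exact Nat.mul_le_mul_right _ hmle
      rw [hhd, hlt] at hP
      omega
    have h3 : 2 * (∑ v ∈ Finset.univ.filter (· ∈ X i), List.count v (List.ofFn wP))
        ≤ 2 * (∑ v ∈ Finset.univ.filter (· ∈ X i), List.count v (List.ofFn w)) := by
      rw [Finset.mul_sum, Finset.mul_sum]
      exact Finset.sum_le_sum fun v _ => h2 v
    omega

lemma prod_X_monomial {F : Type*} [Field F] {ι : Type*} (sfin : Finset ι) (f : ι → Sym2 V) :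
    (∏ i ∈ sfin, (MvPolynomial.X (f i) : MvPolynomial (Sym2 V) F)) =
      MvPolynomial.monomial (∑ i ∈ sfin, Finsupp.single (f i) 1) 1 := by
  induction sfin using Finset.cons_induction with
  | empty => simp
  | cons a sfin ha ih =>
    rw [Finset.prod_cons, Finset.sum_cons, ih]
    have hx : (MvPolynomial.X (f a) : MvPolynomial (Sym2 V) F)
        = MvPolynomial.monomial (Finsupp.single (f a) 1) 1 := by
      rw [← pow_one (MvPolynomial.X (f a)), MvPolynomial.X_pow_eq_monomial]
    rw [hx, MvPolynomial.monomial_mul, one_mul]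

lemma walkMono_eq {F : Type*} [Field F] {ℓ : ℕ} (w : Fin (ℓ + 1) → V) :
    walkMono F w
      = MvPolynomial.monomial (Multiset.toFinsupp (↑(eL (List.ofFn w)))) (1 : F) := by
  rw [show walkMono F w = ∏ i : Fin ℓ, (MvPolynomial.X s(w i.castSucc, w i.succ) :
    MvPolynomial (Sym2 V) F) from rfl, prod_X_monomial]
  have harg : (∑ i : Fin ℓ, Finsupp.single s(w i.castSucc, w i.succ) 1)
      = Multiset.toFinsupp (↑(eL (List.ofFn w)) : Multiset (Sym2 V)) := by
    apply Finsupp.ext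
    intro f
    rw [Finset.sum_apply', Multiset.toFinsupp_apply, Multiset.coe_count, eL_ofFn]
    rw [count_ofFn]
    apply Finset.sum_congr rfl
    intro i _
    rw [Finsupp.single_apply]
    split_ifs <;> rfl
  rw [harg]

lemma polyC_eq_sum (F : Type*) [Field F] (ℓ : ℕ) :
    polyC F G s t g c X ℓ = ∑ w ∈ Finset.univ.filter (fun w : Fin (ℓ + 1) → V =>
      Feasible G s t g c X w), walkMono F w := by
  have h0 : polyC F G s t g c X ℓ
      = ∑ᶠ w ∈ {w : Fin (ℓ + 1) → V | Feasible G s t g c X w}, walkMono F w := rfl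
  rw [h0, ← finsum_mem_coe_finset]
  congr 1
  ext w
  simp

lemma coeff_polyC (F : Type*) [Field F] (ℓ : ℕ) (M : Multiset (Sym2 V)) :
    MvPolynomial.coeff (Multiset.toFinsupp M) (polyC F G s t g c X ℓ)
      = ((Finset.univ.filter (fun w : Fin (ℓ + 1) → V =>
          Feasible G s t g c X w ∧
            (↑(eL (List.ofFn w)) : Multiset (Sym2 V)) = M)).card : F) := by
  rw [polyC_eq_sum, MvPolynomial.coeff_sum]
  have hterm : ∀ w : Fin (ℓ + 1) → V,
      MvPolynomial.coeff (Multiset.toFinsupp M) (walkMono F w)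
        = if (↑(eL (List.ofFn w)) : Multiset (Sym2 V)) = M then (1 : F) else 0 := by
    intro w
    rw [walkMono_eq, MvPolynomial.coeff_monomial]
    congr 1
    exact propext ⟨fun h => Multiset.toFinsupp.injective h, fun h => by rw [h]⟩
  rw [Finset.sum_congr rfl (fun w _ => hterm w), Finset.sum_boole, Finset.filter_filter]

lemma ofFn_getD (l : List V) {m : ℕ} (hlen : l.length = m + 1) (dflt : V) :
    List.ofFn (fun i : Fin (m + 1) => l.getD i dflt) = l := by
  apply List.ext_getElem (by simp [hlen])
  intro n h1 h2
  rw [List.getElem_ofFn]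
  exact l.getD_eq_getElem dflt h2

lemma card_walks_eq_trails (ℓ : ℕ) (M : Multiset (Sym2 V)) (hcard : Multiset.card M = ℓ) :
    (Finset.univ.filter (fun w : Fin (ℓ + 1) → V =>
      IsWalk G s t w ∧ (↑(eL (List.ofFn w)) : Multiset (Sym2 V)) = M)).card
      = (trailsF G M s t).card := by
  have hlen : ∀ l ∈ trailsF G M s t, l.length = ℓ + 1 := by
    intro l hl
    rw [mem_trailsF] at hl
    have h1 := congrArg Multiset.card hl.2.2.2
    rw [Multiset.coe_card, length_eL, hcard] at h1
    have hne : l ≠ [] := by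
      intro h
      rw [h] at hl
      simp at hl
    have := List.length_pos_iff.mpr hne
    omega
  apply Finset.card_nbij' (i := fun w => List.ofFn w)
    (j := fun l => fun i : Fin (ℓ + 1) => l.getD i s)
  · intro w hw
    simp only [Finset.coe_filter, Finset.mem_filter, Finset.mem_univ, true_and, Set.mem_setOf_eq] at hw
    rw [Finset.mem_coe, mem_trailsF]
    obtain ⟨hwalk, hM⟩ := hw
    rw [isWalk_iff_list] at hwalk
    exact ⟨hwalk.1, hwalk.2.1, hwalk.2.2, hM⟩
  · intro l hl
    have hofFn := ofFn_getD l (hlen l hl) s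
    rw [Finset.mem_coe, mem_trailsF] at hl
    rw [Finset.mem_coe, Finset.mem_filter]
    refine ⟨Finset.mem_univ _, ?_, ?_⟩
    · rw [isWalk_iff_list, hofFn]
      exact ⟨hl.1, hl.2.1, hl.2.2.1⟩
    · rw [hofFn]
      exact hl.2.2.2
  · intro w _
    funext i
    show (List.ofFn w).getD i s = w i
    rw [List.getD_eq_getElem _ _ (by simpa using i.isLt : (i : ℕ) < (List.ofFn w).length), List.getElem_ofFn]
  · intro l hl
    exact ofFn_getD l (hlen l hl) s

lemma polyC_ne_zero_of_path (F : Type*) [Field F] {ℓ : ℕ} (w : Fin (ℓ + 1) → V)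
    (hw : Feasible G s t g c X w) (hinj : Function.Injective w) :
    polyC F G s t g c X ℓ ≠ 0 := by
  have hco := coeff_polyC (G := G) (s := s) (t := t) g c X F ℓ (↑(eL (List.ofFn w)))
  have hfilter : Finset.univ.filter (fun w' : Fin (ℓ + 1) → V =>
      Feasible G s t g c X w' ∧ (↑(eL (List.ofFn w')) : Multiset (Sym2 V))
        = ↑(eL (List.ofFn w))) = {w} := by
    ext w'
    simp only [Finset.mem_filter, Finset.mem_singleton, Finset.mem_univ, true_and]
    constructor
    · rintro ⟨hf', hM'⟩
      apply List.ofFn_injective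
      apply eq_of_eL_perm (List.ofFn w) (List.ofFn w') (List.nodup_ofFn.mpr hinj)
      · rw [head?_ofFn, head?_ofFn, hf'.1.1, hw.1.1]
      · exact Multiset.coe_eq_coe.mp hM'
    · rintro rfl
      exact ⟨hw, rfl⟩
  intro h0
  rw [h0, MvPolynomial.coeff_zero, hfilter, Finset.card_singleton] at hco
  simp at hco

lemma exists_path_of_polyC (F : Type*) [Field F] [CharP F 2] (hst : s ≠ t) {ℓ : ℕ}
    (h : polyC F G s t g c X ℓ ≠ 0) :
    ∃ ℓ' ≤ ℓ, ∃ w' : Fin (ℓ' + 1) → V,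
      Feasible G s t g c X w' ∧ Function.Injective w' := by
  obtain ⟨d0, hd0⟩ := MvPolynomial.ne_zero_iff.mp h
  set M0 := Multiset.toFinsupp.symm d0 with hM0def
  have hd0' : Multiset.toFinsupp (α := Sym2 V) M0 = d0 :=
    Multiset.toFinsupp.apply_symm_apply d0
  rw [← hd0', coeff_polyC] at hd0
  set S := Finset.univ.filter (fun w : Fin (ℓ + 1) → V =>
    Feasible G s t g c X w ∧ (↑(eL (List.ofFn w)) : Multiset (Sym2 V)) = M0) with hS
  have hodd : ¬ 2 ∣ S.card := by
    intro hdvd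
    exact hd0 ((CharP.cast_eq_zero_iff F 2 S.card).mpr hdvd)
  have hSne : S.Nonempty := by
    rw [Finset.nonempty_iff_ne_empty]
    intro hemp
    apply hodd
    rw [hemp]
    exact ⟨0, rfl⟩
  obtain ⟨w0, hw0⟩ := hSne
  rw [hS, Finset.mem_filter] at hw0
  obtain ⟨-, hw0f, hw0M⟩ := hw0
  have hSeq : S = Finset.univ.filter (fun w : Fin (ℓ + 1) → V =>
      IsWalk G s t w ∧ (↑(eL (List.ofFn w)) : Multiset (Sym2 V)) = M0) := by
    ext w'
    simp only [hS, Finset.mem_filter, Finset.mem_univ, true_and]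
    constructor
    · rintro ⟨hf, hM⟩
      exact ⟨hf.1, hM⟩
    · rintro ⟨hwalk, hM⟩
      refine ⟨feasible_congr g c X w0 w' hwalk ?_ hw0f, hM⟩
      rw [hw0M, hM]
  have hcM0 : Multiset.card M0 = ℓ := by
    rw [← hw0M, Multiset.coe_card, length_eL, List.length_ofFn]
    omega
  rw [hSeq, card_walks_eq_trails ℓ M0 hcM0] at hodd
  obtain ⟨P, hPhead, hPlast, hPchain, hPnodup, hPcount⟩ :=
    key G (Multiset.card M0) M0 le_rfl s t hst hodd
  have hPne : P ≠ [] := by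
    intro hemp
    rw [hemp] at hPhead
    simp at hPhead
  have hPpos := List.length_pos_iff.mpr hPne
  set ℓ' := P.length - 1 with hℓ'def
  have hPlen : P.length = ℓ' + 1 := by omega
  have hle : ℓ' ≤ ℓ := by
    have h1 : (↑(eL P) : Multiset (Sym2 V)) ≤ M0 := by
      rw [Multiset.le_iff_count]
      intro f
      rw [Multiset.coe_count, hPcount f]
      exact Nat.mod_le _ _
    have h2 := Multiset.card_le_card h1
    rw [Multiset.coe_card, length_eL, hcM0] at h2
    omega
  set wP : Fin (ℓ' + 1) → V := fun i => P.getD i s with hwPdef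
  have hofFn : List.ofFn wP = P := ofFn_getD P hPlen s
  have hwalkP : IsWalk G s t wP := by
    rw [isWalk_iff_list, hofFn]
    exact ⟨hPhead, hPlast, hPchain⟩
  refine ⟨ℓ', hle, wP, ?_, ?_⟩
  · apply path_feasible g c X w0 hw0f wP hwalkP
    intro f
    rw [hofFn, hw0M]
    exact hPcount f
  · exact List.nodup_ofFn.mp (by rw [hofFn]; exact hPnodup)

end Main

end StmtAux

theorem stmt4 {V : Type*} [Fintype V] (G : SimpleGraph V) (s t : V) (hst : s ≠ t)
    (d p : ℕ) (g : Sym2 V → (Fin d → ZMod 2)) (c : Fin d → ZMod 2)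
    (X : Fin p → Set V) (F : Type*) [Field F] [CharP F 2] :
    ((∃ ℓ : ℕ, ∃ w : Fin (ℓ + 1) → V, Feasible G s t g c X w ∧ Function.Injective w) ↔
      (∃ ℓ : ℕ, polyC F G s t g c X ℓ ≠ 0)) ∧
    ((∃ ℓ : ℕ, ∃ w : Fin (ℓ + 1) → V, Feasible G s t g c X w ∧ Function.Injective w) →
      sInf {ℓ : ℕ | ∃ w : Fin (ℓ + 1) → V, Feasible G s t g c X w ∧ Function.Injective w} =
        sInf {ℓ : ℕ | polyC F G s t g c X ℓ ≠ 0}) := by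
  classical
  set A := {ℓ : ℕ | ∃ w : Fin (ℓ + 1) → V, Feasible G s t g c X w ∧ Function.Injective w}
    with hA
  set B := {ℓ : ℕ | polyC F G s t g c X ℓ ≠ 0} with hB
  have hAB : ∀ ℓ ∈ A, ℓ ∈ B := by
    rintro ℓ ⟨w, hwf, hwi⟩
    exact StmtAux.polyC_ne_zero_of_path g c X F w hwf hwi
  have hBA : ∀ ℓ ∈ B, ∃ ℓ' ∈ A, ℓ' ≤ ℓ := by
    intro ℓ hℓ
    obtain ⟨ℓ', hle, w', hwf, hwi⟩ := StmtAux.exists_path_of_polyC g c X F hst hℓ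
    exact ⟨ℓ', ⟨w', hwf, hwi⟩, hle⟩
  constructor
  · constructor
    · rintro ⟨ℓ, w, hw⟩
      exact ⟨ℓ, hAB ℓ ⟨w, hw⟩⟩
    · rintro ⟨ℓ, h⟩
      obtain ⟨ℓ', hA', -⟩ := hBA ℓ h
      exact ⟨ℓ', hA'⟩
  · rintro ⟨ℓ0, w0, hw0⟩
    have hAne : ℓ0 ∈ A := ⟨w0, hw0⟩
    have hBne : B.Nonempty := ⟨ℓ0, hAB ℓ0 hAne⟩
    apply le_antisymm
    · obtain ⟨ℓ', hA', hle⟩ := hBA _ (Nat.sInf_mem hBne)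
      exact le_trans (Nat.sInf_le hA') hle
    · exact Nat.sInf_le (hAB _ (Nat.sInf_mem ⟨ℓ0, hAne⟩))
end

section
/- If there is no feasible s-t-path of length at most ℓ, then there exists a function φ : C_ℓ → C_ℓ such that for every W ∈ C_ℓ: (1) φ(φ(W)) = W, (2) φ(W) ≠ W, and (3) the multiset of edges traversed by φ(W) (counted with multiplicity) equals the multiset of edges traversed by W. -/
namespace WalkPair
variable {V : Type*} [DecidableEq V]
set_option linter.unusedSectionVars false

/-- consecutive-pair edges of a list -/
def eList : List V → List (Sym2 V)
  | [] => []
  | [_] => []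
  | x :: y :: L => s(x, y) :: eList (y :: L)

@[simp] lemma eList_nil : eList ([] : List V) = [] := rfl
@[simp] lemma eList_single (x : V) : eList [x] = [] := rfl
@[simp] lemma eList_cons_cons (x y : V) (L : List V) :
    eList (x :: y :: L) = s(x, y) :: eList (y :: L) := rfl

lemma eList_append (A : List V) (x : V) (B : List V) :
    eList (A ++ x :: B) = eList (A ++ [x]) ++ eList (x :: B) := by
  induction A with
  | nil => simp
  | cons a A ih =>
    cases A with
    | nil => simp
    | cons a' A' => simpa using ih

lemma eList_snoc (M : List V) (hM : M ≠ []) (x : V) :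
    eList (M ++ [x]) = eList M ++ [s(M.getLast hM, x)] := by
  induction M with
  | nil => simp at hM
  | cons m M ih =>
    cases M with
    | nil => simp
    | cons m' M' =>
      rw [List.cons_append, List.cons_append, eList_cons_cons, ← List.cons_append,
        ih (by simp)]
      simp [List.getLast_cons]

lemma eList_reverse (l : List V) : eList l.reverse = (eList l).reverse := by
  induction l with
  | nil => simp
  | cons x L ih =>
    cases L with
    | nil => simp
    | cons y L' =>
      have hne : (y :: L').reverse ≠ [] := by simp
      have h1 : (x :: y :: L').reverse = (y :: L').reverse ++ [x] := by simp
      rw [h1, eList_snoc _ hne x, ih]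
      have h2 : (y :: L').reverse.getLast hne = y := by
        rw [List.getLast_reverse]; rfl
      rw [h2]
      simp [Sym2.eq_swap]

/-- split a list at the first occurrence of `s`. -/
def splitA (s : V) : List V → List V × List V
  | [] => ([], [])
  | x :: xs => if x = s then ([], xs) else (x :: (splitA s xs).1, (splitA s xs).2)

lemma splitA_spec (s : V) : ∀ (l : List V), s ∈ l →
    l = (splitA s l).1 ++ s :: (splitA s l).2 ∧ s ∉ (splitA s l).1 := by
  intro l hl
  induction l with
  | nil => simp at hl
  | cons x xs ih =>
    by_cases hx : x = s
    · subst hx; simp [splitA]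
    · have hs : s ∈ xs := by
        rcases List.mem_cons.mp hl with h | h
        · exact absurd h.symm hx
        · exact h
      obtain ⟨h1, h2⟩ := ih hs
      constructor
      · simp only [splitA, if_neg hx]
        conv_lhs => rw [h1]
        simp
      · simp only [splitA, if_neg hx]
        simp [h2, Ne.symm]
        exact fun h => hx h.symm

lemma splitA_eq (s : V) (A B : List V) (hA : s ∉ A) : splitA s (A ++ s :: B) = (A, B) := by
  induction A with
  | nil => simp [splitA]
  | cons a A ih =>
    have ha : a ≠ s := by rintro rfl; exact hA (by simp)
    have : s ∉ A := fun h => hA (by simp [h])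
    simp [splitA, ha, ih this]


lemma splitA_length_lt (s : V) (l : List V) (h : s ∈ l) :
    (splitA s l).2.length < l.length := by
  have hspec := (splitA_spec s l h).1
  conv_rhs => rw [hspec]
  simp
  omega

/-- The pairing involution on walks (as lists of vertices). -/
def psi : List V → List V
  | [] => []
  | st :: rest =>
    if h : st ∈ rest then
      if (splitA st rest).1.reverse = (splitA st rest).1 then
        st :: (splitA st rest).1 ++ psi (st :: (splitA st rest).2)
      else
        st :: (splitA st rest).1.reverse ++ st :: (splitA st rest).2
    else
      st :: psi rest
termination_by l => l.length
decreasing_by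
  · rename_i h hpal
    simp only [List.length_cons]
    have := splitA_length_lt (V := V) _ _ h
    omega
  · simp [Nat.lt_succ_self]

@[simp] lemma psi_nil : psi ([] : List V) = [] := by rw [psi]

lemma psi_perm (l : List V) : (psi l).Perm l := by
  induction l using psi.induct with
  | case1 => simp
  | case2 st rest h hpal ih =>
    rw [psi, dif_pos h, if_pos hpal]
    obtain ⟨hspec, -⟩ := splitA_spec st rest h
    conv_rhs => rw [hspec]
    exact ((ih.append_left _).cons st).trans (List.Perm.refl _)
  | case3 st rest h hpal =>
    rw [psi, dif_pos h, if_neg hpal]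
    obtain ⟨hspec, -⟩ := splitA_spec st rest h
    conv_rhs => rw [hspec]
    exact ((((splitA st rest).1.reverse_perm).append_right _).cons st)
  | case4 st rest h ih =>
    rw [psi, dif_neg h]
    exact ih.cons st

lemma psi_length (l : List V) : (psi l).length = l.length := (psi_perm l).length_eq

lemma psi_head? (l : List V) : (psi l).head? = l.head? := by
  cases l with
  | nil => simp
  | cons st rest =>
    rw [psi]
    split
    · split <;> simp
    · simp


lemma psi_ne_nil {l : List V} (hl : l ≠ []) : psi l ≠ [] := by
  intro h
  have := psi_length l
  rw [h] at this
  exact hl (List.length_eq_zero_iff.mp this.symm)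

lemma psi_cons_eq (st : V) (T : List V) :
    psi (st :: T) = st :: (psi (st :: T)).tail := by
  have h1 := psi_head? (st :: T)
  cases hh : psi (st :: T) with
  | nil => exact absurd hh (psi_ne_nil (by simp))
  | cons a U =>
    rw [hh] at h1
    simp at h1
    rw [h1]
    rfl

lemma getLast?_append_ne (A B : List V) (hB : B ≠ []) :
    (A ++ B).getLast? = B.getLast? := by
  rw [List.getLast?_append]
  cases hB' : B.getLast? with
  | none => exact absurd (List.getLast?_eq_none_iff.mp hB') hB
  | some b => rfl

lemma psi_getLast? (l : List V) : (psi l).getLast? = l.getLast? := by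
  induction l using psi.induct with
  | case1 => simp
  | case2 st rest h hpal ih =>
    obtain ⟨hspec, hsI⟩ := splitA_spec st rest h
    rw [psi, dif_pos h, if_pos hpal]
    conv_rhs => rw [hspec]
    have h1 : st :: (splitA st rest).1 ++ psi (st :: (splitA st rest).2)
        = (st :: (splitA st rest).1) ++ psi (st :: (splitA st rest).2) := by simp
    have h2 : st :: ((splitA st rest).1 ++ st :: (splitA st rest).2)
        = (st :: (splitA st rest).1) ++ (st :: (splitA st rest).2) := by simp
    rw [h1, h2, getLast?_append_ne _ _ (psi_ne_nil (by simp)),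
      getLast?_append_ne _ _ (by simp), ih]
  | case3 st rest h hpal =>
    obtain ⟨hspec, hsI⟩ := splitA_spec st rest h
    rw [psi, dif_pos h, if_neg hpal]
    conv_rhs => rw [hspec]
    have h1 : st :: (splitA st rest).1.reverse ++ st :: (splitA st rest).2
        = (st :: (splitA st rest).1.reverse) ++ (st :: (splitA st rest).2) := by simp
    have h2 : st :: ((splitA st rest).1 ++ st :: (splitA st rest).2)
        = (st :: (splitA st rest).1) ++ (st :: (splitA st rest).2) := by simp
    rw [h1, h2, getLast?_append_ne _ _ (by simp), getLast?_append_ne _ _ (by simp)]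
  | case4 st rest h ih =>
    rw [psi, dif_neg h]
    cases rest with
    | nil => simp
    | cons x rest' =>
      have hne : psi (x :: rest') ≠ [] := psi_ne_nil (by simp)
      have h1 : st :: psi (x :: rest') = [st] ++ psi (x :: rest') := by simp
      have h2 : st :: x :: rest' = [st] ++ (x :: rest') := by simp
      rw [h1, h2, getLast?_append_ne _ _ hne, getLast?_append_ne _ _ (by simp), ih]

lemma psi_edges_perm (l : List V) :
    (eList (psi l)).Perm (eList l) := by
  induction l using psi.induct with
  | case1 => simp
  | case2 st rest h hpal ih =>
    obtain ⟨hspec, hsI⟩ := splitA_spec st rest h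
    rw [psi, dif_pos h, if_pos hpal]
    conv_rhs => rw [hspec]
    obtain ⟨U, hU⟩ : ∃ U, psi (st :: (splitA st rest).2) = st :: U :=
      ⟨_, psi_cons_eq st (splitA st rest).2⟩
    have l1 : st :: (splitA st rest).1 ++ psi (st :: (splitA st rest).2)
        = (st :: (splitA st rest).1) ++ st :: U := by rw [hU]
    have l2 : st :: ((splitA st rest).1 ++ st :: (splitA st rest).2)
        = (st :: (splitA st rest).1) ++ st :: (splitA st rest).2 := by simp
    rw [l1, l2, eList_append (st :: (splitA st rest).1) st U,
      eList_append (st :: (splitA st rest).1) st (splitA st rest).2]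
    refine List.Perm.append_left _ ?_
    rw [← hU]
    exact ih
  | case3 st rest h hpal =>
    obtain ⟨hspec, hsI⟩ := splitA_spec st rest h
    rw [psi, dif_pos h, if_neg hpal]
    conv_rhs => rw [hspec]
    have l1 : st :: (splitA st rest).1.reverse ++ st :: (splitA st rest).2
        = (st :: (splitA st rest).1.reverse) ++ st :: (splitA st rest).2 := by simp
    have l2 : st :: ((splitA st rest).1 ++ st :: (splitA st rest).2)
        = (st :: (splitA st rest).1) ++ st :: (splitA st rest).2 := by simp
    rw [l1, l2, eList_append (st :: (splitA st rest).1.reverse) st (splitA st rest).2,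
      eList_append (st :: (splitA st rest).1) st (splitA st rest).2]
    refine List.Perm.append_right _ ?_
    have h3 : (st :: (splitA st rest).1.reverse) ++ [st]
        = ((st :: (splitA st rest).1) ++ [st]).reverse := by simp
    rw [h3, eList_reverse]
    exact (eList ((st :: (splitA st rest).1) ++ [st])).reverse_perm
  | case4 st rest h ih =>
    rw [psi, dif_neg h]
    cases rest with
    | nil => simp
    | cons x rest' =>
      obtain ⟨U, hU⟩ : ∃ U, psi (x :: rest') = x :: U := ⟨_, psi_cons_eq x rest'⟩
      rw [hU, eList_cons_cons, eList_cons_cons, ← hU]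
      exact ih.cons _

lemma psi_edges (l : List V) :
    (↑(eList (psi l)) : Multiset (Sym2 V)) = ↑(eList l) :=
  Multiset.coe_eq_coe.mpr (psi_edges_perm l)


@[simp] lemma chain'_iff_isChain {R : V → V → Prop} {l : List V} :
    List.Chain' R l ↔ List.IsChain R l := Iff.rfl

lemma chain'_loop {R : V → V → Prop} (hR : Symmetric R) {st : V} {I T : List V}
    (hc : List.Chain' R ((st :: I) ++ (st :: T))) :
    List.Chain' R ((st :: I) ++ [st]) ∧ List.Chain' R (st :: T) := by
  rw [List.Chain', List.isChain_append] at hc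
  obtain ⟨h1, h2, h3⟩ := hc
  refine ⟨?_, h2⟩
  rw [List.Chain', List.isChain_append]
  refine ⟨h1, List.isChain_singleton st, ?_⟩
  intro x hx y hy
  simp only [List.head?_cons, Option.mem_def, Option.some.injEq] at hy
  subst hy
  exact h3 x hx st (by simp)

lemma chain'_loop_rev {R : V → V → Prop} (hR : Symmetric R) {st : V} {I : List V}
    (hc : List.Chain' R ((st :: I) ++ [st])) :
    List.Chain' R ((st :: I.reverse) ++ [st]) := by
  have h1 : List.Chain' (flip R) ((st :: I) ++ [st]) :=
    List.IsChain.imp (fun a b hab => hR hab) hc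
  have h2 : List.Chain' R (((st :: I) ++ [st]).reverse) := List.isChain_reverse.mpr h1
  have h3 : ((st :: I) ++ [st]).reverse = (st :: I.reverse) ++ [st] := by simp
  rwa [h3] at h2

lemma psi_chain' {R : V → V → Prop} (hR : Symmetric R) (l : List V)
    (hc : List.Chain' R l) : List.Chain' R (psi l) := by
  induction l using psi.induct with
  | case1 => simpa using hc
  | case2 st rest h hpal ih =>
    obtain ⟨hspec, hsI⟩ := splitA_spec st rest h
    rw [hspec] at hc
    have hc' : List.Chain' R ((st :: (splitA st rest).1) ++ (st :: (splitA st rest).2)) := by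
      simpa using hc
    obtain ⟨hloop, htail⟩ := chain'_loop hR hc'
    rw [psi, dif_pos h, if_pos hpal]
    have goal' : List.Chain' R ((st :: (splitA st rest).1) ++ psi (st :: (splitA st rest).2)) := by
      rw [List.Chain', List.isChain_append]
      refine ⟨(List.isChain_append.mp hloop).1, ih htail, ?_⟩
      intro x hx y hy
      rw [psi_head?] at hy
      simp only [List.head?_cons, Option.mem_def, Option.some.injEq] at hy
      subst hy
      exact (List.isChain_append.mp hloop).2.2 x hx st (by simp)
    simpa using goal'
  | case3 st rest h hpal =>
    obtain ⟨hspec, hsI⟩ := splitA_spec st rest h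
    rw [hspec] at hc
    have hc' : List.Chain' R ((st :: (splitA st rest).1) ++ (st :: (splitA st rest).2)) := by
      simpa using hc
    obtain ⟨hloop, htail⟩ := chain'_loop hR hc'
    have hloop' := chain'_loop_rev hR hloop
    rw [psi, dif_pos h, if_neg hpal]
    have goal' : List.Chain' R ((st :: (splitA st rest).1.reverse)
        ++ (st :: (splitA st rest).2)) := by
      rw [List.Chain', List.isChain_append]
      refine ⟨(List.isChain_append.mp hloop').1, htail, ?_⟩
      intro x hx y hy
      simp only [List.head?_cons, Option.mem_def, Option.some.injEq] at hy
      subst hy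
      exact (List.isChain_append.mp hloop').2.2 x hx st (by simp)
    simpa using goal'
  | case4 st rest h ih =>
    rw [psi, dif_neg h]
    rw [List.Chain', List.isChain_cons] at hc ⊢
    refine ⟨?_, ih hc.2⟩
    intro y hy
    rw [psi_head?] at hy
    exact hc.1 y hy

lemma psi_invol (l : List V) : psi (psi l) = l := by
  induction l using psi.induct with
  | case1 => simp
  | case2 st rest h hpal ih =>
    obtain ⟨hspec, hsI⟩ := splitA_spec st rest h
    rw [psi, dif_pos h, if_pos hpal]
    obtain ⟨U, hU⟩ : ∃ U, psi (st :: (splitA st rest).2) = st :: U :=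
      ⟨_, psi_cons_eq st (splitA st rest).2⟩
    have harg : st :: (splitA st rest).1 ++ psi (st :: (splitA st rest).2)
        = st :: ((splitA st rest).1 ++ st :: U) := by rw [hU]; simp
    rw [harg, psi, dif_pos (by simp : st ∈ (splitA st rest).1 ++ st :: U),
      splitA_eq st (splitA st rest).1 U hsI]
    simp only [if_pos hpal]
    rw [← hU, ih]
    conv_rhs => rw [hspec]
    simp
  | case3 st rest h hpal =>
    obtain ⟨hspec, hsI⟩ := splitA_spec st rest h
    rw [psi, dif_pos h, if_neg hpal]
    have hsIr : st ∉ (splitA st rest).1.reverse := by simpa using hsI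
    have harg : st :: (splitA st rest).1.reverse ++ st :: (splitA st rest).2
        = st :: ((splitA st rest).1.reverse ++ st :: (splitA st rest).2) := by simp
    rw [harg, psi,
      dif_pos (by simp : st ∈ (splitA st rest).1.reverse ++ st :: (splitA st rest).2),
      splitA_eq st (splitA st rest).1.reverse (splitA st rest).2 hsIr]
    have hcond : ¬ ((splitA st rest).1.reverse.reverse = (splitA st rest).1.reverse) := by
      rw [List.reverse_reverse]
      intro hh
      exact hpal hh.symm
    rw [if_neg hcond, List.reverse_reverse]
    conv_rhs => rw [hspec]
    simp
  | case4 st rest h ih =>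
    rw [psi, dif_neg h]
    have h2 : st ∉ psi rest := fun hh => h ((psi_perm rest).mem_iff.mp hh)
    rw [psi, dif_neg h2, ih]


lemma pal_edges_even {I : List V} (hI : List.Palindrome I) :
    ∀ x : V, List.Chain' Ne ((x :: I) ++ [x]) →
      ∀ e, (↑(eList ((x :: I) ++ [x])) : Multiset (Sym2 V)).count e % 2 = 0 := by
  induction hI with
  | nil =>
    intro x hchain e
    simp at hchain
  | singleton a =>
    intro x hchain e
    have h0 : ((x :: [a]) ++ [x]) = [x, a, x] := by simp
    rw [h0]
    have he : eList [x, a, x] = [s(x,a), s(a,x)] := rfl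
    rw [he]
    have hs : s(a,x) = s(x,a) := Sym2.eq_swap
    rw [hs]
    rcases eq_or_ne e s(x,a) with he' | he' <;>
      simp [Multiset.count_cons, he', Multiset.count_singleton]
  | @cons_concat a l hp ih =>
    intro x hchain e
    have hMne : (a :: (l ++ [a])) ≠ [] := by simp
    have hgl : (a :: (l ++ [a])).getLast hMne = a := by
      rw [List.getLast_cons (by simp)]
      exact List.getLast_append _
    have he : eList ((x :: (a :: (l ++ [a]))) ++ [x])
        = s(x, a) :: (eList (a :: (l ++ [a])) ++ [s(a, x)]) := by
      have h1 : (x :: (a :: (l ++ [a]))) ++ [x] = x :: a :: ((l ++ [a]) ++ [x]) := by simp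
      rw [h1, eList_cons_cons]
      have h2 : a :: ((l ++ [a]) ++ [x]) = (a :: (l ++ [a])) ++ [x] := by simp
      rw [h2, eList_snoc _ hMne x, hgl]
    have hchain' : List.Chain' Ne ((a :: l) ++ [a]) := by
      have h1 : List.Chain' Ne ((a :: (l ++ [a])) ++ [x]) := hchain.tail
      have h2 := (List.isChain_append.mp h1).1
      simpa using h2
    have hcnt := ih a hchain' e
    have hML : (a :: (l ++ [a])) = ((a :: l) ++ [a]) := by simp
    rw [he]
    have hsw : s(a, x) = s(x, a) := Sym2.eq_swap
    have hco : (↑(s(x, a) :: (eList (a :: (l ++ [a])) ++ [s(a, x)])) : Multiset (Sym2 V))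
        = s(x,a) ::ₘ (↑(eList (a :: (l ++ [a]))) + ↑[s(a,x)]) := by
      rw [Multiset.coe_add, Multiset.cons_coe]
    rw [hco, hsw]
    rw [hML] at *
    simp only [Multiset.count_cons, Multiset.count_add]
    have hsg : Multiset.count e ↑[s(x,a)] = if e = s(x,a) then 1 else 0 := by
      simp [Multiset.count_singleton]
    rw [hsg]
    split <;> omega

lemma psi_fixed (G : SimpleGraph V) (l : List V) (hc : List.Chain' G.Adj l)
    (hfix : psi l = l) :
    ∃ p : List V, p.head? = l.head? ∧ p.getLast? = l.getLast? ∧ List.Chain' G.Adj p ∧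
      p.Nodup ∧ (∀ v ∈ p, v ∈ l) ∧
      ∀ e, (↑(eList p) : Multiset (Sym2 V)).count e % 2
          = (↑(eList l) : Multiset (Sym2 V)).count e % 2 := by
  induction l using psi.induct with
  | case1 =>
    exact ⟨[], by simp, by simp, by simp, by simp, by simp, by simp⟩
  | case2 st rest h hpal ih =>
    obtain ⟨hspec, hsI⟩ := splitA_spec st rest h
    rw [psi, dif_pos h, if_pos hpal] at hfix
    have hfix2 : psi (st :: (splitA st rest).2) = st :: (splitA st rest).2 := by
      have h1 : st :: (splitA st rest).1 ++ psi (st :: (splitA st rest).2)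
          = (st :: (splitA st rest).1) ++ psi (st :: (splitA st rest).2) := by simp
      have h2 : st :: rest = (st :: (splitA st rest).1) ++ (st :: (splitA st rest).2) := by
        conv_lhs => rw [hspec]
        simp
      rw [h1, h2] at hfix
      exact List.append_cancel_left hfix
    have hc' : List.Chain' G.Adj ((st :: (splitA st rest).1) ++ (st :: (splitA st rest).2)) := by
      rw [hspec] at hc
      simpa using hc
    obtain ⟨hloop, htail⟩ := chain'_loop (fun a b hab => hab.symm) hc'
    obtain ⟨p, hp1, hp2, hp3, hp4, hp5, hp6⟩ := ih htail hfix2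
    refine ⟨p, ?_, ?_, hp3, hp4, ?_, ?_⟩
    · rw [hp1]; rfl
    · rw [hp2]
      have h2 : st :: rest = (st :: (splitA st rest).1) ++ (st :: (splitA st rest).2) := by
        conv_lhs => rw [hspec]
        simp
      rw [h2, getLast?_append_ne _ _ (by simp)]
    · intro v hv
      have hmem := hp5 v hv
      rw [hspec]
      rcases List.mem_cons.mp hmem with h1 | h1
      · simp [h1]
      · simp [h1]
    · intro e
      rw [hp6 e]
      have h2 : st :: rest = (st :: (splitA st rest).1) ++ st :: (splitA st rest).2 := by
        conv_lhs => rw [hspec]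
        simp
      rw [h2, eList_append (st :: (splitA st rest).1) st (splitA st rest).2]
      have hcoe : (↑(eList ((st :: (splitA st rest).1) ++ [st])
          ++ eList (st :: (splitA st rest).2)) : Multiset (Sym2 V))
          = ↑(eList ((st :: (splitA st rest).1) ++ [st]))
            + ↑(eList (st :: (splitA st rest).2)) := by
        rw [Multiset.coe_add]
      rw [hcoe, Multiset.count_add]
      have hNe : List.Chain' Ne ((st :: (splitA st rest).1) ++ [st]) :=
        hloop.imp (fun a b hab => hab.ne)
      have heven := pal_edges_even (List.Palindrome.of_reverse_eq hpal) st hNe e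
      omega
  | case3 st rest h hpal =>
    obtain ⟨hspec, hsI⟩ := splitA_spec st rest h
    rw [psi, dif_pos h, if_neg hpal] at hfix
    exfalso
    have h1 : st :: (splitA st rest).1.reverse ++ st :: (splitA st rest).2
        = (st :: (splitA st rest).1.reverse) ++ (st :: (splitA st rest).2) := by simp
    have h2 : st :: rest = (st :: (splitA st rest).1) ++ (st :: (splitA st rest).2) := by
      conv_lhs => rw [hspec]
      simp
    rw [h1, h2] at hfix
    have hlen : (st :: (splitA st rest).1.reverse).length
        = (st :: (splitA st rest).1).length := by simp
    have h3 := List.append_inj_left hfix hlen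
    rw [List.cons.injEq] at h3
    exact hpal h3.2
  | case4 st rest h ih =>
    rw [psi, dif_neg h] at hfix
    have hfix2 : psi rest = rest := by
      rw [List.cons.injEq] at hfix
      exact hfix.2
    cases rest with
    | nil =>
      refine ⟨[st], by simp, by simp, by simp, by simp, by simp, ?_⟩
      intro e; simp
    | cons x rest' =>
      have hcx : G.Adj st x := (List.isChain_cons.mp hc).1 x rfl
      obtain ⟨p', hp1, hp2, hp3, hp4, hp5, hp6⟩ := ih hc.tail hfix2
      have hp'ne : p' ≠ [] := by
        intro hh; rw [hh] at hp1; simp at hp1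
      have hp1' : p'.head? = some x := by simpa using hp1
      have hp'' : p' = x :: p'.tail := by
        cases p' with
        | nil => simp at hp'ne
        | cons a b =>
          simp only [List.head?_cons, Option.some.injEq] at hp1'
          rw [hp1']
          rfl
      refine ⟨st :: p', rfl, ?_, ?_, ?_, ?_, ?_⟩
      · have hsp : st :: p' = [st] ++ p' := rfl
        rw [hsp, getLast?_append_ne _ _ hp'ne, hp2, List.getLast?_cons_cons]
      · refine List.isChain_cons.mpr ⟨?_, hp3⟩
        intro z hz
        rw [hp1'] at hz
        simp only [Option.mem_def, Option.some.injEq] at hz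
        subst hz
        exact hcx
      · exact List.nodup_cons.mpr ⟨fun hmem => h (hp5 st hmem), hp4⟩
      · intro v hv
        rcases List.mem_cons.mp hv with h1 | h1
        · simp [h1]
        · simp [hp5 v h1]
      · intro e
        conv_lhs => rw [hp'']
        rw [eList_cons_cons, eList_cons_cons]
        rw [← hp'']
        have c1 : (↑(s(st,x) :: eList p') : Multiset (Sym2 V))
            = s(st,x) ::ₘ ↑(eList p') := rfl
        have c2 : (↑(s(st,x) :: eList (x :: rest')) : Multiset (Sym2 V))
            = s(st,x) ::ₘ ↑(eList (x :: rest')) := rfl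
        rw [c1, c2, Multiset.count_cons, Multiset.count_cons]
        have := hp6 e
        split <;> omega


section Glue

lemma ofFn_head? {n : ℕ} (w : Fin (n + 1) → V) :
    (List.ofFn w).head? = some (w 0) := by
  simp [List.ofFn_succ]

lemma ofFn_ne_nil {n : ℕ} (w : Fin (n + 1) → V) : List.ofFn w ≠ [] := by
  intro h
  have := List.length_ofFn (f := w)
  rw [h] at this
  simp at this

lemma ofFn_getLast? {n : ℕ} (w : Fin (n + 1) → V) :
    (List.ofFn w).getLast? = some (w (Fin.last n)) := by
  rw [List.getLast?_eq_getLast (ofFn_ne_nil w), List.getLast_eq_getElem]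
  congr 1
  rw [List.getElem_ofFn]
  congr 1
  ext
  simp

lemma ofFn_chain'_iff {n : ℕ} (w : Fin (n + 1) → V) {R : V → V → Prop} :
    List.Chain' R (List.ofFn w) ↔ ∀ i : Fin n, R (w i.castSucc) (w i.succ) := by
  rw [List.Chain', List.isChain_iff_getElem]
  constructor
  · intro H i
    have h2 := H i (by simp)
    simp only [List.getElem_ofFn] at h2
    convert h2 using 2 <;> ext <;> simp
  · intro H i h1
    simp only [List.getElem_ofFn]
    rw [List.length_ofFn] at h1
    have h2 := H ⟨i, by omega⟩
    convert h2 using 2 <;> ext <;> simp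
end Glue

lemma eList_length (l : List V) : (eList l).length = l.length - 1 := by
  induction l with
  | nil => simp
  | cons x L ih =>
    cases L with
    | nil => simp
    | cons y L' =>
      rw [eList_cons_cons]
      simp only [List.length_cons] at *
      omega

lemma eList_getElem (l : List V) (i : ℕ) (h : i < (eList l).length) :
    (eList l)[i] = s(l[i]'(by rw [eList_length] at h; omega),
      l[i+1]'(by rw [eList_length] at h; omega)) := by
  induction l generalizing i with
  | nil => simp at h
  | cons x L ih =>
    cases L with
    | nil => simp at h
    | cons y L' =>
      cases i with
      | zero => rfl
      | succ j =>
        have h' : j < (eList (y :: L')).length := by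
          rw [eList_cons_cons] at h
          simpa using h
        simp only [eList_cons_cons, List.getElem_cons_succ]
        exact ih j h'

lemma eList_ofFn {n : ℕ} (w : Fin (n + 1) → V) :
    eList (List.ofFn w) = List.ofFn (fun i : Fin n => s(w i.castSucc, w i.succ)) := by
  apply List.ext_getElem
  · rw [eList_length]
    simp
  · intro i h1 h2
    rw [eList_getElem, List.getElem_ofFn, List.getElem_ofFn, List.getElem_ofFn]
    congr 1 <;> (ext; simp)

lemma count_coe (l : List V) (v : V) : Multiset.count v (↑l : Multiset V) = l.count v := by
  simp [Multiset.coe_count]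

lemma count_ofFn {n : ℕ} (w : Fin n → V) (v : V) :
    Multiset.count v (↑(List.ofFn w) : Multiset V)
      = (Finset.univ.filter (fun j => v = w j)).card := by
  rw [← Fin.univ_val_map, Multiset.count_map]
  rfl

lemma map_sum_mod2 {d : ℕ} {α : Type*} [DecidableEq α] (g : α → (Fin d → ZMod 2))
    (m₁ m₂ : Multiset α) (h : ∀ e, m₁.count e % 2 = m₂.count e % 2) :
    (m₁.map g).sum = (m₂.map g).sum := by
  have h2 : ∀ x : Fin d → ZMod 2, (2 : ℕ) • x = 0 := by
    intro x
    funext i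
    show (2 : ℕ) • x i = 0
    rw [two_nsmul]
    exact CharTwo.add_self_eq_zero (x i)
  have key : ∀ (k : ℕ) (x : Fin d → ZMod 2), k • x = (k % 2) • x := by
    intro k x
    conv_lhs => rw [← Nat.div_add_mod k 2]
    rw [add_nsmul, mul_comm, mul_nsmul, h2, zero_add]
  rw [Finset.sum_multiset_map_count m₁ g, Finset.sum_multiset_map_count m₂ g]
  have e1 : ∑ m ∈ m₁.toFinset, m₁.count m • g m
      = ∑ m ∈ (m₁.toFinset ∪ m₂.toFinset), m₁.count m • g m := by
    apply Finset.sum_subset Finset.subset_union_left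
    intro e _ hne
    rw [Multiset.count_eq_zero_of_notMem (by simpa using hne)]
    simp
  have e2 : ∑ m ∈ m₂.toFinset, m₂.count m • g m
      = ∑ m ∈ (m₁.toFinset ∪ m₂.toFinset), m₂.count m • g m := by
    apply Finset.sum_subset Finset.subset_union_right
    intro e _ hne
    rw [Multiset.count_eq_zero_of_notMem (by simpa using hne)]
    simp
  rw [e1, e2]
  apply Finset.sum_congr rfl
  intro e _
  rw [key (m₁.count e), key (m₂.count e), h e]


lemma psi_count (l : List V) (v : V) :
    Multiset.count v (↑(psi l) : Multiset V) = Multiset.count v (↑l : Multiset V) := by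
  rw [Multiset.coe_eq_coe.mpr (psi_perm l)]

end WalkPair

section Helpers
open WalkPair
variable {V : Type*} [DecidableEq V]
set_option linter.unusedSectionVars false

lemma ofFn_get_list (l : List V) {n : ℕ} (h : l.length = n + 1) :
    List.ofFn (fun i : Fin (n + 1) => l.get (Fin.cast h.symm i)) = l := by
  apply List.ext_getElem
  · simp [h]
  · intro i h1 h2
    rw [List.getElem_ofFn]
    rw [List.get_eq_getElem]
    rfl

lemma X_transfer {n m : ℕ} (w : Fin (n + 1) → V) (w' : Fin (m + 1) → V) (S : Set V)
    (hcnt : ∀ v : V, Multiset.count v (↑(List.ofFn w') : Multiset V)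
        ≤ Multiset.count v (↑(List.ofFn w) : Multiset V))
    (hX : ∀ j j' : Fin (n + 1), w j ∈ S → w j' ∈ S → j = j') :
    ∀ j j' : Fin (m + 1), w' j ∈ S → w' j' ∈ S → j = j' := by
  intro j j' hj hj'
  by_contra hne
  rcases eq_or_ne (w' j) (w' j') with hv | hv
  · have h2 : 1 < (Finset.univ.filter (fun k : Fin (m + 1) => w' j = w' k)).card := by
      rw [Finset.one_lt_card]
      exact ⟨j, by simp, j', by simp [hv], hne⟩
    have h3 : 1 < Multiset.count (w' j) (↑(List.ofFn w) : Multiset V) := by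
      refine lt_of_lt_of_le ?_ (hcnt (w' j))
      rw [count_ofFn]
      exact h2
    rw [count_ofFn] at h3
    rw [Finset.one_lt_card] at h3
    obtain ⟨k, hk, k', hk', hkk⟩ := h3
    simp only [Finset.mem_filter, Finset.mem_univ, true_and] at hk hk'
    exact hkk (hX k k' (by rw [← hk]; exact hj) (by rw [← hk']; exact hj))
  · have hmem : ∀ v ∈ List.ofFn w', v ∈ List.ofFn w := by
      intro v hvmem
      have h1 : 0 < Multiset.count v (↑(List.ofFn w') : Multiset V) :=
        Multiset.count_pos.mpr (by simpa using hvmem)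
      have h2 : 0 < Multiset.count v (↑(List.ofFn w) : Multiset V) :=
        lt_of_lt_of_le h1 (hcnt v)
      simpa using Multiset.count_pos.mp h2
    obtain ⟨k, hk⟩ := Set.mem_range.mp ((List.mem_ofFn' _ _).mp
      (hmem (w' j) ((List.mem_ofFn' _ _).mpr ⟨j, rfl⟩)))
    obtain ⟨k', hk'⟩ := Set.mem_range.mp ((List.mem_ofFn' _ _).mp
      (hmem (w' j') ((List.mem_ofFn' _ _).mpr ⟨j', rfl⟩)))
    have hkk := hX k k' (by rw [hk]; exact hj) (by rw [hk']; exact hj')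
    rw [hkk, hk'] at hk
    exact hv hk.symm

lemma sum_transfer {d n : ℕ} (g : Sym2 V → (Fin d → ZMod 2)) (w : Fin (n + 1) → V) :
    (∑ i : Fin n, g s(w i.castSucc, w i.succ))
      = ((↑(eList (List.ofFn w)) : Multiset (Sym2 V)).map g).sum := by
  rw [eList_ofFn, ← Fin.univ_val_map, Multiset.map_map, Finset.sum_eq_multiset_sum]
  rfl

end Helpers



/-- The multiset of edges traversed by a walk, counted with multiplicity. -/
def edgeMultiset {V : Type*} {ℓ : ℕ} (w : Fin (ℓ + 1) → V) : Multiset (Sym2 V) :=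
  (Finset.univ : Finset (Fin ℓ)).val.map fun i => s(w i.castSucc, w i.succ)


open WalkPair in
lemma edge_eq {V : Type*} [DecidableEq V] {n : ℕ} (w : Fin (n + 1) → V) :
    edgeMultiset w = (↑(WalkPair.eList (List.ofFn w)) : Multiset (Sym2 V)) := by
  rw [WalkPair.eList_ofFn, ← Fin.univ_val_map]
  rfl

theorem stmt5 {V : Type*} [Fintype V] (G : SimpleGraph V) (s t : V) (hst : s ≠ t)
    (d p : ℕ) (g : Sym2 V → (Fin d → ZMod 2)) (c : Fin d → ZMod 2)
    (X : Fin p → Set V) (ℓ : ℕ)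
    (hno : ∀ ℓ' ≤ ℓ, ∀ w : Fin (ℓ' + 1) → V,
      Feasible G s t g c X w → ¬ Function.Injective w) :
    ∃ φ : {w : Fin (ℓ + 1) → V // Feasible G s t g c X w} →
          {w : Fin (ℓ + 1) → V // Feasible G s t g c X w},
      ∀ W, φ (φ W) = W ∧ φ W ≠ W ∧ edgeMultiset (φ W).val = edgeMultiset W.val := by
  letI : DecidableEq V := Classical.decEq V
  have hlen : ∀ w : Fin (ℓ + 1) → V, (WalkPair.psi (List.ofFn w)).length = ℓ + 1 := fun w => by
    rw [WalkPair.psi_length, List.length_ofFn]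
  set F : (Fin (ℓ + 1) → V) → (Fin (ℓ + 1) → V) := fun w i =>
    (WalkPair.psi (List.ofFn w)).get (Fin.cast (hlen w).symm i) with hFdef
  have hofFn : ∀ w, List.ofFn (F w) = WalkPair.psi (List.ofFn w) := fun w =>
    ofFn_get_list _ (hlen w)
  have hedge : ∀ w : Fin (ℓ + 1) → V, edgeMultiset (F w) = edgeMultiset w := by
    intro w
    rw [edge_eq, edge_eq, hofFn, WalkPair.psi_edges]
  have hinv : ∀ w, F (F w) = w := by
    intro w
    have h1 : List.ofFn (F (F w)) = List.ofFn w := by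
      rw [hofFn, hofFn, WalkPair.psi_invol]
    exact List.ofFn_injective h1
  have hfeas : ∀ w, Feasible G s t g c X w → Feasible G s t g c X (F w) := by
    intro w hw
    obtain ⟨⟨hw0, hwl, hwadj⟩, hwsum, hwX⟩ := hw
    refine ⟨⟨?_, ?_, ?_⟩, ?_, ?_⟩
    · have h2 : (List.ofFn (F w)).head? = some s := by
        rw [hofFn, WalkPair.psi_head?, WalkPair.ofFn_head?, hw0]
      rw [WalkPair.ofFn_head?] at h2
      exact Option.some_injective _ h2
    · have h2 : (List.ofFn (F w)).getLast? = some t := by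
        rw [hofFn, WalkPair.psi_getLast?, WalkPair.ofFn_getLast?, hwl]
      rw [WalkPair.ofFn_getLast?] at h2
      exact Option.some_injective _ h2
    · have h2 : List.Chain' G.Adj (List.ofFn (F w)) := by
        rw [hofFn]
        exact WalkPair.psi_chain' (fun a b hab => hab.symm) _
          ((WalkPair.ofFn_chain'_iff w).mpr hwadj)
      exact (WalkPair.ofFn_chain'_iff (F w)).mp h2
    · rw [sum_transfer, hofFn, WalkPair.psi_edges, ← sum_transfer]
      exact hwsum
    · intro i
      refine X_transfer w (F w) (X i) ?_ (hwX i)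
      intro v
      rw [hofFn, WalkPair.psi_count]
  have hfix : ∀ w, Feasible G s t g c X w → F w ≠ w := by
    intro w hw hFw
    have hfixl : WalkPair.psi (List.ofFn w) = List.ofFn w := by
      rw [← hofFn, hFw]
    obtain ⟨⟨hw0, hwl, hwadj⟩, hwsum, hwX⟩ := hw
    obtain ⟨q, hq1, hq2, hq3, hq4, hq5, hq6⟩ :=
      WalkPair.psi_fixed G (List.ofFn w) ((WalkPair.ofFn_chain'_iff w).mpr hwadj) hfixl
    have hqne : q ≠ [] := by
      intro hnil
      rw [hnil, WalkPair.ofFn_head?] at hq1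
      simp at hq1
    have hqlen : q.length = (q.length - 1) + 1 := by
      cases q with
      | nil => exact absurd rfl hqne
      | cons a b => simp
    set n' := q.length - 1 with hn'
    set wq : Fin (n' + 1) → V := fun i => q.get (Fin.cast hqlen.symm i) with hwqdef
    have hsub : q.toFinset ⊆ (List.ofFn w).toFinset := by
      intro v hv
      rw [List.mem_toFinset] at hv ⊢
      exact hq5 v hv
    have hlenq : q.length ≤ ℓ + 1 := by
      calc q.length = q.toFinset.card := (List.toFinset_card_of_nodup hq4).symm
        _ ≤ (List.ofFn w).toFinset.card := Finset.card_le_card hsub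
        _ ≤ (List.ofFn w).length := List.toFinset_card_le _
        _ = ℓ + 1 := List.length_ofFn (f := w)
    have hle : n' ≤ ℓ := by omega
    have hofq : List.ofFn wq = q := ofFn_get_list q hqlen
    have hfq : Feasible G s t g c X wq := by
      refine ⟨⟨?_, ?_, ?_⟩, ?_, ?_⟩
      · have h2 : (List.ofFn wq).head? = some s := by
          rw [hofq, hq1, WalkPair.ofFn_head?, hw0]
        rw [WalkPair.ofFn_head?] at h2
        exact Option.some_injective _ h2
      · have h2 : (List.ofFn wq).getLast? = some t := by
          rw [hofq, hq2, WalkPair.ofFn_getLast?, hwl]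
        rw [WalkPair.ofFn_getLast?] at h2
        exact Option.some_injective _ h2
      · refine (WalkPair.ofFn_chain'_iff wq).mp ?_
        rw [hofq]
        exact hq3
      · rw [sum_transfer, hofq, WalkPair.map_sum_mod2 g _ _ hq6, ← sum_transfer]
        exact hwsum
      · intro i
        refine X_transfer w wq (X i) ?_ (hwX i)
        intro v
        rw [hofq]
        by_cases hvq : v ∈ q
        · have h1 : Multiset.count v (↑q : Multiset V) ≤ 1 := by
            rw [WalkPair.count_coe]
            exact (List.nodup_iff_count_le_one.mp hq4) v
          have h2 : 1 ≤ Multiset.count v (↑(List.ofFn w) : Multiset V) := by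
            rw [Multiset.one_le_count_iff_mem]
            simpa using hq5 v hvq
          omega
        · have h0 : Multiset.count v (↑q : Multiset V) = 0 := by
            rw [Multiset.count_eq_zero]
            simpa using hvq
          omega
    have hinj : Function.Injective wq := by
      intro a b hab
      have h3 := List.nodup_iff_injective_get.mp hq4 hab
      exact Fin.ext (by simpa using congrArg Fin.val h3)
    exact hno n' hle wq hfq hinj
  refine ⟨fun W => ⟨F W.1, hfeas W.1 W.2⟩, fun W => ⟨?_, ?_, ?_⟩⟩
  · exact Subtype.ext (hinv W.1)
  · intro hEq
    exact hfix W.1 W.2 (congrArg Subtype.val hEq)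
  · exact hedge W.1
end

section
/- Let G be a finite simple graph (in particular, with no self-loops) and let W = (v_0, v_1, …, v_ℓ) with ℓ ≥ 1 be a walk in G whose vertex sequence is a palindrome, i.e. v_k = v_{ℓ−k} for all 0 ≤ k ≤ ℓ. Then ℓ is even; for every unordered pair e of vertices, the number of indices k ∈ [ℓ] with {v_{k−1}, v_k} = e is even; and consequently, for every natural number d and every function g from unordered vertex pairs to (ZMod 2)^d, Σ_{k=1}^{ℓ} g({v_{k−1}, v_k}) = 0. -/
theorem stmt7 {V : Type*} [Fintype V] (G : SimpleGraph V) (ℓ : ℕ) (hℓ : 1 ≤ ℓ)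
    (w : Fin (ℓ + 1) → V)
    (hadj : ∀ i : Fin ℓ, G.Adj (w i.castSucc) (w i.succ))
    (hpal : ∀ k : Fin (ℓ + 1), w k = w k.rev) :
    Even ℓ ∧
    (∀ e : Sym2 V, Even {i : Fin ℓ | s(w i.castSucc, w i.succ) = e}.ncard) ∧
    (∀ (d : ℕ) (g : Sym2 V → (Fin d → ZMod 2)),
      (∑ i : Fin ℓ, g s(w i.castSucc, w i.succ)) = 0) := by
  classical
  -- the edge at index `i.rev` equals the edge at index `i`
  have hedge : ∀ i : Fin ℓ, s(w i.rev.castSucc, w i.rev.succ) = s(w i.castSucc, w i.succ) := by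
    intro i
    have h1 : w i.rev.castSucc = w i.succ := by
      rw [hpal i.rev.castSucc, Fin.rev_castSucc, Fin.rev_rev]
    have h2 : w i.rev.succ = w i.castSucc := by
      rw [hpal i.rev.succ, Fin.rev_succ, Fin.rev_rev]
    rw [h1, h2, Sym2.eq_swap]
  have heven : Even ℓ := by
    by_contra hodd
    rw [Nat.not_even_iff_odd] at hodd
    obtain ⟨m, rfl⟩ := hodd
    have hm : m < 2 * m + 1 := by omega
    have := hadj ⟨m, hm⟩
    apply this.ne
    have := hpal (⟨m, hm⟩ : Fin (2 * m + 1)).castSucc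
    rw [this]
    congr 1
    ext
    simp [Fin.val_rev]
    omega
  have hnofix : ∀ i : Fin ℓ, i.rev ≠ i := by
    intro i h
    have := congrArg Fin.val h
    rw [Fin.val_rev] at this
    obtain ⟨m, rfl⟩ := heven
    omega
  refine ⟨heven, ?_, ?_⟩
  · intro e
    rw [← ZMod.natCast_eq_zero_iff_even]
    have hset : {i : Fin ℓ | s(w i.castSucc, w i.succ) = e}.ncard
        = (Finset.univ.filter (fun i : Fin ℓ => s(w i.castSucc, w i.succ) = e)).card := by
      rw [Set.ncard_eq_toFinset_card']
      congr 1
      ext i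
      simp
    rw [hset, Finset.card_filter]
    push_cast
    refine Finset.sum_ninvolution Fin.rev ?_ ?_ (fun i => Finset.mem_univ _) Fin.rev_rev
    · intro i
      rw [hedge i]
      by_cases h : s(w i.castSucc, w i.succ) = e <;> simp [h] <;> decide
    · intro i _
      exact hnofix i
  · intro d g
    refine Finset.sum_ninvolution Fin.rev ?_ ?_ (fun i => Finset.mem_univ _) Fin.rev_rev
    · intro i
      rw [hedge i]
      exact funext fun x => CharTwo.add_self_eq_zero _
    · intro i _
      exact hnofix i
end

section
/- Let W = (v_0, v_1, …, v_ℓ) be a feasible s-t-walk and let 0 ≤ i < j ≤ ℓ be indices such that the subsequence (v_i, v_{i+1}, …, v_j) is a palindrome, i.e. v_{i+k} = v_{j−k} for all 0 ≤ k ≤ j−i (in particular v_i = v_j). Then the sequence W' = (v_0, …, v_i, v_{j+1}, …, v_ℓ) obtained by deleting the vertices at positions i+1, …, j is a feasible s-t-walk of length ℓ − (j − i). -/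
theorem stmt10 {V : Type*} [Fintype V] (G : SimpleGraph V) (s t : V) (hst : s ≠ t)
    (d p : ℕ) (g : Sym2 V → (Fin d → ZMod 2)) (c : Fin d → ZMod 2)
    (X : Fin p → Set V) (ℓ : ℕ)
    (w : Fin (ℓ + 1) → V) (hw : Feasible G s t g c X w)
    (i j : ℕ) (hij : i < j) (hjℓ : j ≤ ℓ)
    (hpal : ∀ (k : ℕ) (hk : k ≤ j - i), w ⟨i + k, by omega⟩ = w ⟨j - k, by omega⟩) :
    Feasible G s t g c X
      (fun k : Fin (ℓ - (j - i) + 1) =>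
        if (k : ℕ) ≤ i then w ⟨(k : ℕ), by omega⟩
        else w ⟨(k : ℕ) + (j - i), by omega⟩) := by
  obtain ⟨⟨hs, ht, hadj⟩, hsum, hX⟩ := hw
  set m := j - i with hm
  set w' := (fun k : Fin (ℓ - m + 1) =>
      if (k : ℕ) ≤ i then w ⟨(k : ℕ), by omega⟩
      else w ⟨(k : ℕ) + m, by omega⟩) with hw'def
  have hm1 : 1 ≤ m := by omega
  have wcongr : ∀ (a b : ℕ) (ha : a < ℓ + 1) (hb : b < ℓ + 1), a = b →
      w ⟨a, ha⟩ = w ⟨b, hb⟩ := by rintro a b ha hb rfl; rfl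
  have hW : ∀ (a : ℕ) (ha : a < ℓ), G.Adj (w ⟨a, by omega⟩) (w ⟨a + 1, by omega⟩) :=
    fun a ha => hadj ⟨a, ha⟩
  have hpal' : ∀ (k : ℕ), k ≤ m → ∀ (h1 : i + k < ℓ + 1) (h2 : i + (m - k) < ℓ + 1),
      w ⟨i + k, h1⟩ = w ⟨i + (m - k), h2⟩ := by
    intro k hk h1 h2
    have h := hpal k (by omega)
    rw [h]
    exact wcongr _ _ _ _ (by omega)
  have hw'L : ∀ (a : ℕ) (h : a < ℓ - m + 1) (ha : a ≤ i),
      w' ⟨a, h⟩ = w ⟨a, by omega⟩ := by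
    intro a h ha
    simp only [hw'def]
    rw [if_pos ha]
  have hw'R : ∀ (a : ℕ) (h : a < ℓ - m + 1) (ha : ¬ a ≤ i),
      w' ⟨a, h⟩ = w ⟨a + m, by omega⟩ := by
    intro a h ha
    simp only [hw'def]
    rw [if_neg ha]
  -- m is even
  have hmev : m % 2 = 0 := by
    by_contra hodd
    obtain ⟨r, hr⟩ : ∃ r, m = 2 * r + 1 := ⟨m / 2, by omega⟩
    have h1 : w ⟨i + (r + 1), by omega⟩ = w ⟨i + (m - (r + 1)), by omega⟩ :=
      hpal' (r + 1) (by omega) (by omega) (by omega)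
    have h2 : w ⟨i + (m - (r + 1)), by omega⟩ = w ⟨i + r, by omega⟩ :=
      wcongr _ _ _ _ (by omega)
    have hadj' : G.Adj (w ⟨i + r, by omega⟩) (w ⟨i + (r + 1), by omega⟩) :=
      hW (i + r) (by omega)
    rw [h1, h2] at hadj'
    exact G.irrefl hadj'
  -- the edge-label function, as a function on ℕ
  set F : ℕ → (Fin d → ZMod 2) := fun a =>
    if h : a < ℓ then g s(w ⟨a, by omega⟩, w ⟨a + 1, by omega⟩) else 0 with hFdef
  have hFeq : ∀ (a : ℕ), a < ℓ → ∀ (h1 : a < ℓ + 1) (h2 : a + 1 < ℓ + 1),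
      F a = g s(w ⟨a, h1⟩, w ⟨a + 1, h2⟩) := by
    intro a ha h1 h2
    simp only [hFdef]
    rw [dif_pos ha]
  have hsum' : ∑ a ∈ Finset.range ℓ, F a = c := by
    rw [← hsum, ← Fin.sum_univ_eq_sum_range]
    exact Finset.sum_congr rfl fun k _ => hFeq k k.isLt _ _
  have hsplit : (∑ a ∈ Finset.range i, F a) + (∑ a ∈ Finset.Ico i (i + m), F a)
      + (∑ a ∈ Finset.Ico (i + m) ℓ, F a) = c := by
    rw [add_assoc, Finset.sum_Ico_consecutive F (by omega : i ≤ i + m) (by omega : i + m ≤ ℓ),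
      Finset.range_eq_Ico, Finset.sum_Ico_consecutive F (by omega : 0 ≤ i) (by omega : i ≤ ℓ),
      ← Finset.range_eq_Ico]
    exact hsum'
  have hFpair : ∀ r, r < m → F (i + r) = F (i + (m - 1 - r)) := by
    intro r hr
    rw [hFeq (i + r) (by omega) (by omega) (by omega),
      hFeq (i + (m - 1 - r)) (by omega) (by omega) (by omega)]
    have e1 : w ⟨i + r, by omega⟩ = w ⟨i + (m - r), by omega⟩ :=
      hpal' r (by omega) (by omega) (by omega)
    have e2 : w ⟨i + r + 1, by omega⟩ = w ⟨i + (m - (r + 1)), by omega⟩ :=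
      hpal' (r + 1) (by omega) (by omega) (by omega)
    rw [e1, e2, Sym2.eq_swap,
      wcongr (i + (m - (r + 1))) (i + (m - 1 - r)) (by omega) (by omega) (by omega),
      wcongr (i + (m - r)) (i + (m - 1 - r) + 1) (by omega) (by omega) (by omega)]
  have hmid : ∑ a ∈ Finset.Ico i (i + m), F a = 0 := by
    rw [Finset.sum_Ico_eq_sum_range]
    have him : i + m - i = m := by omega
    rw [him]
    refine Finset.sum_involution (fun r _ => m - 1 - r) ?_ ?_ ?_ ?_
    · intro r hr
      rw [← hFpair r (Finset.mem_range.mp hr)]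
      funext x
      simp only [Pi.add_apply, Pi.zero_apply]
      exact CharTwo.add_self_eq_zero _
    · intro r hr _
      show m - 1 - r ≠ r
      omega
    · intro r hr
      simp only [Finset.mem_range] at hr ⊢
      omega
    · intro r hr
      show m - 1 - (m - 1 - r) = r
      have := Finset.mem_range.mp hr
      omega
  have hnewsum : ∑ a ∈ Finset.range (ℓ - m), (if a < i then F a else F (a + m)) = c := by
    have h1 : ∑ a ∈ Finset.range (ℓ - m), (if a < i then F a else F (a + m))
        = (∑ a ∈ Finset.range i, F a) + ∑ a ∈ Finset.Ico i (ℓ - m), F (a + m) := by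
      rw [Finset.range_eq_Ico,
        ← Finset.sum_Ico_consecutive _ (by omega : 0 ≤ i) (by omega : i ≤ ℓ - m),
        ← Finset.range_eq_Ico]
      congr 1
      · refine Finset.sum_congr rfl fun a ha => ?_
        rw [if_pos (Finset.mem_range.mp ha)]
      · refine Finset.sum_congr rfl fun a ha => ?_
        have := (Finset.mem_Ico.mp ha).1
        rw [if_neg (by omega)]
    have h2 : ∑ a ∈ Finset.Ico i (ℓ - m), F (a + m) = ∑ a ∈ Finset.Ico (i + m) ℓ, F a := by
      rw [Finset.sum_Ico_eq_sum_range, Finset.sum_Ico_eq_sum_range]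
      have e : ℓ - m - i = ℓ - (i + m) := by omega
      rw [e]
      exact Finset.sum_congr rfl fun r _ => by rw [show i + r + m = i + m + r by omega]
    rw [h1, h2, ← hsplit, hmid, add_zero]
  refine ⟨⟨?_, ?_, ?_⟩, ?_, ?_⟩
  · exact (hw'L 0 (by omega) (by omega)).trans hs
  · by_cases hle : ℓ - m ≤ i
    · have h1 := hw'L (ℓ - m) (by omega) hle
      have e : w ⟨ℓ - m, by omega⟩ = w ⟨ℓ, by omega⟩ := by
        calc w ⟨ℓ - m, by omega⟩ = w ⟨i + (m - m), by omega⟩ := wcongr _ _ _ _ (by omega)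
          _ = w ⟨i + m, by omega⟩ := (hpal' m le_rfl (by omega) (by omega)).symm
          _ = w ⟨ℓ, by omega⟩ := wcongr _ _ _ _ (by omega)
      exact h1.trans (e.trans ht)
    · have h1 := hw'R (ℓ - m) (by omega) hle
      exact h1.trans ((wcongr _ _ (by omega) (by omega) (by omega)).trans ht)
  · intro k
    have hkb : (k : ℕ) < ℓ - m := k.isLt
    show G.Adj (w' ⟨(k : ℕ), by omega⟩) (w' ⟨(k : ℕ) + 1, by omega⟩)
    by_cases hk1 : (k : ℕ) + 1 ≤ i
    · rw [hw'L (k : ℕ) (by omega) (by omega), hw'L ((k : ℕ) + 1) (by omega) hk1]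
      exact hW (k : ℕ) (by omega)
    · by_cases hk2 : (k : ℕ) ≤ i
      · rw [hw'L (k : ℕ) (by omega) hk2, hw'R ((k : ℕ) + 1) (by omega) (by omega)]
        have e : w ⟨(k : ℕ), by omega⟩ = w ⟨(k : ℕ) + m, by omega⟩ := by
          calc w ⟨(k : ℕ), by omega⟩ = w ⟨i + (m - m), by omega⟩ := wcongr _ _ _ _ (by omega)
            _ = w ⟨i + m, by omega⟩ := (hpal' m le_rfl (by omega) (by omega)).symm
            _ = w ⟨(k : ℕ) + m, by omega⟩ := wcongr _ _ _ _ (by omega)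
        rw [e, wcongr ((k : ℕ) + 1 + m) ((k : ℕ) + m + 1) (by omega) (by omega) (by omega)]
        exact hW ((k : ℕ) + m) (by omega)
      · rw [hw'R (k : ℕ) (by omega) hk2, hw'R ((k : ℕ) + 1) (by omega) (by omega),
          wcongr ((k : ℕ) + 1 + m) ((k : ℕ) + m + 1) (by omega) (by omega) (by omega)]
        exact hW ((k : ℕ) + m) (by omega)
  · rw [← Fin.sum_univ_eq_sum_range] at hnewsum
    rw [← hnewsum]
    refine Finset.sum_congr rfl fun k _ => ?_
    have hkb : (k : ℕ) < ℓ - m := k.isLt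
    show g s(w' ⟨(k : ℕ), by omega⟩, w' ⟨(k : ℕ) + 1, by omega⟩)
      = if (k : ℕ) < i then F (k : ℕ) else F ((k : ℕ) + m)
    by_cases hk1 : (k : ℕ) + 1 ≤ i
    · rw [hw'L (k : ℕ) (by omega) (by omega), hw'L ((k : ℕ) + 1) (by omega) hk1,
        if_pos (by omega : (k : ℕ) < i), hFeq (k : ℕ) (by omega) (by omega) (by omega)]
    · by_cases hk2 : (k : ℕ) ≤ i
      · rw [hw'L (k : ℕ) (by omega) hk2, hw'R ((k : ℕ) + 1) (by omega) (by omega),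
          if_neg (by omega : ¬ (k : ℕ) < i),
          hFeq ((k : ℕ) + m) (by omega) (by omega) (by omega)]
        have e : w ⟨(k : ℕ), by omega⟩ = w ⟨(k : ℕ) + m, by omega⟩ := by
          calc w ⟨(k : ℕ), by omega⟩ = w ⟨i + (m - m), by omega⟩ := wcongr _ _ _ _ (by omega)
            _ = w ⟨i + m, by omega⟩ := (hpal' m le_rfl (by omega) (by omega)).symm
            _ = w ⟨(k : ℕ) + m, by omega⟩ := wcongr _ _ _ _ (by omega)
        rw [e, wcongr ((k : ℕ) + 1 + m) ((k : ℕ) + m + 1) (by omega) (by omega) (by omega)]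
      · rw [hw'R (k : ℕ) (by omega) hk2, hw'R ((k : ℕ) + 1) (by omega) (by omega),
          if_neg (by omega : ¬ (k : ℕ) < i),
          hFeq ((k : ℕ) + m) (by omega) (by omega) (by omega),
          wcongr ((k : ℕ) + 1 + m) ((k : ℕ) + m + 1) (by omega) (by omega) (by omega)]
  · intro q a b hA hB
    have hab : (a : ℕ) < ℓ - m + 1 := a.isLt
    have hbb : (b : ℕ) < ℓ - m + 1 := b.isLt
    by_cases hq1 : (a : ℕ) ≤ i <;> by_cases hq2 : (b : ℕ) ≤ i
    · have hA' : w ⟨(a : ℕ), by omega⟩ ∈ X q := by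
        rw [← hw'L (a : ℕ) a.isLt hq1]; exact hA
      have hB' : w ⟨(b : ℕ), by omega⟩ ∈ X q := by
        rw [← hw'L (b : ℕ) b.isLt hq2]; exact hB
      have hv := congrArg Fin.val (hX q ⟨(a : ℕ), by omega⟩ ⟨(b : ℕ), by omega⟩ hA' hB')
      exact Fin.ext (by exact hv)
    · have hA' : w ⟨(a : ℕ), by omega⟩ ∈ X q := by
        rw [← hw'L (a : ℕ) a.isLt hq1]; exact hA
      have hB' : w ⟨(b : ℕ) + m, by omega⟩ ∈ X q := by
        rw [← hw'R (b : ℕ) b.isLt hq2]; exact hB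
      have hv := congrArg Fin.val (hX q ⟨(a : ℕ), by omega⟩ ⟨(b : ℕ) + m, by omega⟩ hA' hB')
      simp only at hv
      omega
    · have hA' : w ⟨(a : ℕ) + m, by omega⟩ ∈ X q := by
        rw [← hw'R (a : ℕ) a.isLt hq1]; exact hA
      have hB' : w ⟨(b : ℕ), by omega⟩ ∈ X q := by
        rw [← hw'L (b : ℕ) b.isLt hq2]; exact hB
      have hv := congrArg Fin.val (hX q ⟨(a : ℕ) + m, by omega⟩ ⟨(b : ℕ), by omega⟩ hA' hB')
      simp only at hv
      omega
    · have hA' : w ⟨(a : ℕ) + m, by omega⟩ ∈ X q := by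
        rw [← hw'R (a : ℕ) a.isLt hq1]; exact hA
      have hB' : w ⟨(b : ℕ) + m, by omega⟩ ∈ X q := by
        rw [← hw'R (b : ℕ) b.isLt hq2]; exact hB
      have hv := congrArg Fin.val (hX q ⟨(a : ℕ) + m, by omega⟩ ⟨(b : ℕ) + m, by omega⟩ hA' hB')
      simp only at hv
      exact Fin.ext (by omega)
end

section
/- Let G be a connected finite simple graph and let X, Y ⊆ V(G) satisfy X ∪ Y = V(G), X ∩ Y = {v}, and no edge of G joins a vertex of X ∖ {v} to a vertex of Y ∖ {v}. Let S, T be disjoint nonempty vertex sets with S ∪ T ⊆ Y, and let k be a natural number. Then (G,S,T,k) is a yes-instance of Two-Sets Cut-Uncut if and only if (G[Y],S,T,k) is a yes-instance of Two-Sets Cut-Uncut. -/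
section Aux
variable {V : Type*} {G : SimpleGraph V} {X Y : Set V} {v : V}

lemma cutSet_swap (G : SimpleGraph V) (A B : Set V)
    (hu : A ∪ B = Set.univ) (hi : A ∩ B = ∅) : cutSet G A = cutSet G B := by
  have key : ∀ u : V, u ∈ B ↔ u ∉ A := by
    intro u
    constructor
    · intro hb ha
      exact absurd (hi ▸ Set.mem_inter ha hb) (Set.notMem_empty u)
    · intro ha
      rcases (Set.eq_univ_iff_forall.mp hu u) with h | h
      · exact absurd h ha
      · exact h
  ext e
  constructor
  · rintro ⟨he, x, y, rfl, hx, hy⟩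
    exact ⟨he, y, x, Sym2.eq_swap, (key y).mpr hy, fun h => ((key x).mp h) hx⟩
  · rintro ⟨he, x, y, rfl, hx, hy⟩
    refine ⟨he, y, x, Sym2.eq_swap, ?_, ?_⟩
    · by_contra h
      exact hy ((key y).mpr h)
    · intro h
      exact ((key x).mp hx) h

lemma twoSets_swap {S T : Set V} {k : ℕ} (h : TwoSetsCutUncut G S T k) :
    TwoSetsCutUncut G T S k := by
  obtain ⟨A, B, hu, hi, hSA, hTB, hSc, hTc, hcut⟩ := h
  exact ⟨B, A, Set.union_comm A B ▸ hu, Set.inter_comm A B ▸ hi, hTB, hSA, hTc, hSc,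
    cutSet_swap G A B hu hi ▸ hcut⟩

lemma cross_mem (hXY : X ∪ Y = Set.univ) (hvY : v ∈ Y)
    (hsep : ∀ x ∈ X \ {v}, ∀ y ∈ Y \ {v}, ¬ G.Adj x y) :
    ∀ {c b : V} (w : G.Walk c b), c ∉ Y → b ∈ Y → v ∈ w.support := by
  intro c b w
  induction w with
  | nil => intro hc hb; exact absurd hb hc
  | @cons a d b' hadj w ih =>
    intro hc hb
    by_cases hd : d ∈ Y
    · have haX : a ∈ X := by
        rcases (Set.eq_univ_iff_forall.mp hXY a) with h' | h'
        · exact h'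
        · exact absurd h' hc
      have hav : a ≠ v := fun h' => hc (h' ▸ hvY)
      have hdv : d = v := by
        by_contra hdv
        exact hsep a ⟨haX, hav⟩ d ⟨hd, hdv⟩ hadj
      rw [SimpleGraph.Walk.support_cons]
      exact List.mem_cons_of_mem _ (hdv ▸ w.start_mem_support)
    · rw [SimpleGraph.Walk.support_cons]
      exact List.mem_cons_of_mem _ (ih hd hb)

lemma stay_in_Y (hXY : X ∪ Y = Set.univ) (hvY : v ∈ Y)
    (hsep : ∀ x ∈ X \ {v}, ∀ y ∈ Y \ {v}, ¬ G.Adj x y) :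
    ∀ (n : ℕ) {a b : V} (w : G.Walk a b), w.length ≤ n → a ∈ Y → b ∈ Y →
      ∃ w' : G.Walk a b, (∀ u ∈ w'.support, u ∈ w.support) ∧ ∀ u ∈ w'.support, u ∈ Y := by
  classical
  intro n
  induction n with
  | zero =>
    intro a b w hlen ha hb
    refine ⟨w, fun u hu => hu, ?_⟩
    cases w with
    | nil => intro u hu; simp at hu; exact hu ▸ ha
    | cons h w => simp at hlen
  | succ n ih =>
    intro a b w hlen ha hb
    cases w with
    | nil =>
      refine ⟨SimpleGraph.Walk.nil, fun u hu => hu, ?_⟩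
      intro u hu; simp at hu; exact hu ▸ ha
    | @cons _ d _ hadj w =>
      rw [SimpleGraph.Walk.length_cons, Nat.succ_le_succ_iff] at hlen
      by_cases hd : d ∈ Y
      · obtain ⟨w', hsub, hY⟩ := ih w hlen hd hb
        refine ⟨SimpleGraph.Walk.cons hadj w', ?_, ?_⟩
        · intro u hu
          rw [SimpleGraph.Walk.support_cons] at hu ⊢
          rcases List.mem_cons.mp hu with h' | h'
          · exact h' ▸ List.mem_cons_self
          · exact List.mem_cons_of_mem _ (hsub u h')
        · intro u hu
          rw [SimpleGraph.Walk.support_cons] at hu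
          rcases List.mem_cons.mp hu with h' | h'
          · exact h' ▸ ha
          · exact hY u h'
      · have hav : a = v := by
          by_contra hav
          have hdX : d ∈ X := by
            rcases (Set.eq_univ_iff_forall.mp hXY d) with h' | h'
            · exact h'
            · exact absurd h' hd
          exact hsep d ⟨hdX, fun hdv => hd (hdv ▸ hvY)⟩ a ⟨ha, hav⟩ hadj.symm
        subst hav
        have hv : a ∈ w.support := cross_mem hXY hvY hsep w hd hb
        obtain ⟨w', hsub, hY⟩ :=
          ih (w.dropUntil a hv) (le_trans (w.length_dropUntil_le hv) hlen) hvY hb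
        refine ⟨w', ?_, hY⟩
        intro u hu
        rw [SimpleGraph.Walk.support_cons]
        exact List.mem_cons_of_mem _ ((w.support_dropUntil_subset hv) (hsub u hu))

lemma to_induce : ∀ {a b : V} (w : G.Walk a b), (∀ u ∈ w.support, u ∈ Y) →
    ∀ (ha : a ∈ Y) (hb : b ∈ Y),
    ∃ w' : (G.induce Y).Walk ⟨a, ha⟩ ⟨b, hb⟩, ∀ u ∈ w'.support, u.val ∈ w.support := by
  intro a b w
  induction w with
  | nil =>
    intro _ ha hb
    refine ⟨SimpleGraph.Walk.nil, ?_⟩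
    intro u hu
    simp only [SimpleGraph.Walk.support_nil, List.mem_singleton] at hu
    subst hu
    exact SimpleGraph.Walk.start_mem_support _
  | @cons a d b hadj w ih =>
    intro hw ha hb
    have hd : d ∈ Y := hw d (by simp)
    obtain ⟨w', hsub⟩ := ih (fun u hu => hw u (by simp [hu])) hd hb
    have hadj' : (G.induce Y).Adj ⟨a, ha⟩ ⟨d, hd⟩ := hadj
    refine ⟨SimpleGraph.Walk.cons hadj' w', ?_⟩
    intro u hu
    rw [SimpleGraph.Walk.support_cons] at hu ⊢
    rcases List.mem_cons.mp hu with h' | h'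
    · exact h' ▸ List.mem_cons_self
    · exact List.mem_cons_of_mem _ (hsub u h')

lemma of_induce : ∀ {p q : Y} (w : (G.induce Y).Walk p q),
    ∃ w' : G.Walk p.val q.val, ∀ u ∈ w'.support, ∃ u' ∈ w.support, u = u'.val := by
  intro p q w
  induction w with
  | nil =>
    refine ⟨SimpleGraph.Walk.nil, ?_⟩
    intro u hu
    simp only [SimpleGraph.Walk.support_nil, List.mem_singleton] at hu
    exact ⟨_, SimpleGraph.Walk.start_mem_support _, hu⟩
  | @cons p d q hadj w ih =>
    obtain ⟨w', hsub⟩ := ih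
    have hadj' : G.Adj p.val d.val := hadj
    refine ⟨SimpleGraph.Walk.cons hadj' w', ?_⟩
    intro u hu
    rw [SimpleGraph.Walk.support_cons] at hu
    rcases List.mem_cons.mp hu with h' | h'
    · exact ⟨p, SimpleGraph.Walk.start_mem_support _, h'⟩
    · obtain ⟨u', hu', heq⟩ := hsub u h'
      exact ⟨u', by rw [SimpleGraph.Walk.support_cons]; exact List.mem_cons_of_mem _ hu', heq⟩

/-- Main construction lemma for the backward direction, assuming `v`'s side is `A'`. -/
lemma construct [Finite V] {k : ℕ} (hXY : X ∪ Y = Set.univ) (hXYv : X ∩ Y = {v}) (hvX : v ∈ X) (hvY : v ∈ Y)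
    (hsep : ∀ x ∈ X \ {v}, ∀ y ∈ Y \ {v}, ¬ G.Adj x y)
    (S T : Set V) (hSY : S ⊆ Y) (hTY : T ⊆ Y)
    (A' B' : Set Y) (hu : A' ∪ B' = Set.univ) (hi : A' ∩ B' = ∅)
    (hSA : Subtype.val ⁻¹' S ⊆ A') (hTB : Subtype.val ⁻¹' T ⊆ B')
    (hSc : ∀ x ∈ Subtype.val ⁻¹' S, ∀ y ∈ Subtype.val ⁻¹' S, ReachableIn (G.induce Y) A' x y)
    (hTc : ∀ x ∈ Subtype.val ⁻¹' T, ∀ y ∈ Subtype.val ⁻¹' T, ReachableIn (G.induce Y) B' x y)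
    (hcut : (cutSet (G.induce Y) A').ncard ≤ k)
    (hvA : (⟨v, hvY⟩ : Y) ∈ A') :
    TwoSetsCutUncut G S T k := by
  have disjAB : ∀ p : Y, p ∈ A' → p ∈ B' → False := by
    intro p h1 h2
    exact absurd (hi ▸ Set.mem_inter h1 h2) (Set.notMem_empty p)
  refine ⟨X ∪ (Subtype.val '' A'), (Subtype.val '' B') \ X, ?_, ?_, ?_, ?_, ?_, ?_, ?_⟩
  · apply Set.eq_univ_iff_forall.mpr
    intro u
    by_cases hX : u ∈ X
    · exact Or.inl (Or.inl hX)
    · have hY : u ∈ Y := by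
        rcases (Set.eq_univ_iff_forall.mp hXY u) with h | h
        · exact absurd h hX
        · exact h
      rcases (Set.eq_univ_iff_forall.mp hu ⟨u, hY⟩) with h | h
      · exact Or.inl (Or.inr ⟨⟨u, hY⟩, h, rfl⟩)
      · exact Or.inr ⟨⟨⟨u, hY⟩, h, rfl⟩, hX⟩
  · apply Set.eq_empty_iff_forall_notMem.mpr
    rintro u ⟨h1, ⟨b, hb, hbu⟩, hnX⟩
    rcases h1 with h1 | ⟨a, ha, hau⟩
    · exact hnX h1
    · have : a = b := Subtype.ext (hau.trans hbu.symm)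
      exact disjAB a ha (this ▸ hb)
  · intro s hs
    exact Or.inr ⟨⟨s, hSY hs⟩, hSA hs, rfl⟩
  · intro t ht
    refine ⟨⟨⟨t, hTY ht⟩, hTB ht, rfl⟩, ?_⟩
    intro htX
    have htv : t = v := by
      have h2 : t ∈ ({v} : Set V) := hXYv ▸ (⟨htX, hTY ht⟩ : t ∈ X ∩ Y)
      exact h2
    subst htv
    exact disjAB ⟨t, hvY⟩ hvA (hTB ht)
  · intro x hx y hy
    obtain ⟨w, hw⟩ := hSc ⟨x, hSY hx⟩ hx ⟨y, hSY hy⟩ hy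
    obtain ⟨w', hsub⟩ := of_induce w
    refine ⟨w', ?_⟩
    intro u hu
    obtain ⟨u', hu', rfl⟩ := hsub u hu
    exact Or.inr ⟨u', hw u' hu', rfl⟩
  · intro x hx y hy
    obtain ⟨w, hw⟩ := hTc ⟨x, hTY hx⟩ hx ⟨y, hTY hy⟩ hy
    obtain ⟨w', hsub⟩ := of_induce w
    refine ⟨w', ?_⟩
    intro u hu
    obtain ⟨u', hu', rfl⟩ := hsub u hu
    refine ⟨⟨u', hw u' hu', rfl⟩, ?_⟩
    intro huX
    have huv : u'.val = v := by
      have h2 : u'.val ∈ ({v} : Set V) := hXYv ▸ (⟨huX, u'.2⟩ : u'.val ∈ X ∩ Y)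
      exact h2
    have heq : u' = ⟨v, hvY⟩ := Subtype.ext huv
    exact disjAB ⟨v, hvY⟩ hvA (heq ▸ hw u' hu')
  · -- cut bound
    have hsubset : cutSet G (X ∪ Subtype.val '' A') ⊆
        Sym2.map Subtype.val '' cutSet (G.induce Y) A' := by
      rintro e ⟨he, x, y, rfl, hx, hy⟩
      rw [SimpleGraph.mem_edgeSet] at he
      have hyX : y ∉ X := fun h => hy (Or.inl h)
      have hyY : y ∈ Y := by
        rcases (Set.eq_univ_iff_forall.mp hXY y) with h | h
        · exact absurd h hyX
        · exact h
      have hyv : y ≠ v := fun h => hyX (h ▸ hvX)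
      have hxY : x ∈ Y := by
        by_cases hxX : x ∈ X
        · have hxv : x = v := by
            by_contra hxv
            exact hsep x ⟨hxX, hxv⟩ y ⟨hyY, hyv⟩ he
          exact hxv ▸ hvY
        · rcases (Set.eq_univ_iff_forall.mp hXY x) with h | h
          · exact absurd h hxX
          · exact h
      have hxA' : (⟨x, hxY⟩ : Y) ∈ A' := by
        rcases hx with hxX | ⟨a, ha, hax⟩
        · have hxv : x = v := by
            have h2 : x ∈ ({v} : Set V) := hXYv ▸ (⟨hxX, hxY⟩ : x ∈ X ∩ Y)
            exact h2
          subst hxv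
          exact hvA
        · have : a = ⟨x, hxY⟩ := Subtype.ext hax
          exact this ▸ ha
      have hyA' : (⟨y, hyY⟩ : Y) ∉ A' := fun h => hy (Or.inr ⟨⟨y, hyY⟩, h, rfl⟩)
      refine ⟨s(⟨x, hxY⟩, ⟨y, hyY⟩), ⟨?_, ⟨x, hxY⟩, ⟨y, hyY⟩, rfl, hxA', hyA'⟩, rfl⟩
      exact he
    calc (cutSet G (X ∪ Subtype.val '' A')).ncard
        ≤ (Sym2.map Subtype.val '' cutSet (G.induce Y) A').ncard := by
          exact Set.ncard_le_ncard hsubset (Set.toFinite _)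
      _ = (cutSet (G.induce Y) A').ncard :=
          Set.ncard_image_of_injective _ (Sym2.map.injective Subtype.val_injective)
      _ ≤ k := hcut

end Aux

theorem stmt12 {V : Type*} [Fintype V] (G : SimpleGraph V) (hG : G.Connected)
    (X Y : Set V) (v : V) (hXY : X ∪ Y = Set.univ) (hXYv : X ∩ Y = {v})
    (hsep : ∀ x ∈ X \ {v}, ∀ y ∈ Y \ {v}, ¬ G.Adj x y)
    (S T : Set V) (hS : S.Nonempty) (hT : T.Nonempty) (hST : Disjoint S T)
    (hSTY : S ∪ T ⊆ Y) (k : ℕ) :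
    TwoSetsCutUncut G S T k ↔
      TwoSetsCutUncut (G.induce Y) (Subtype.val ⁻¹' S) (Subtype.val ⁻¹' T) k := by
  have hvXY : v ∈ X ∩ Y := by rw [hXYv]; rfl
  have hvX : v ∈ X := hvXY.1
  have hvY : v ∈ Y := hvXY.2
  have hSY : S ⊆ Y := fun s hs => hSTY (Or.inl hs)
  have hTY : T ⊆ Y := fun t ht => hSTY (Or.inr ht)
  constructor
  · rintro ⟨A, B, hu, hi, hSA, hTB, hSc, hTc, hcut⟩
    refine ⟨Subtype.val ⁻¹' A, Subtype.val ⁻¹' B, ?_, ?_,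
      fun x hx => hSA hx, fun x hx => hTB hx, ?_, ?_, ?_⟩
    · apply Set.eq_univ_iff_forall.mpr
      intro p
      rcases Set.eq_univ_iff_forall.mp hu p.val with h | h
      · exact Or.inl h
      · exact Or.inr h
    · apply Set.eq_empty_iff_forall_notMem.mpr
      rintro p ⟨h1, h2⟩
      exact absurd (hi ▸ Set.mem_inter h1 h2) (Set.notMem_empty p.val)
    · intro x hx y hy
      obtain ⟨w, hw⟩ := hSc x.val hx y.val hy
      obtain ⟨w2, hsub2, hY2⟩ := stay_in_Y hXY hvY hsep w.length w le_rfl x.2 y.2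
      obtain ⟨w3, hsub3⟩ := to_induce w2 hY2 x.2 y.2
      exact ⟨w3, fun u hu' => hw u.val (hsub2 u.val (hsub3 u hu'))⟩
    · intro x hx y hy
      obtain ⟨w, hw⟩ := hTc x.val hx y.val hy
      obtain ⟨w2, hsub2, hY2⟩ := stay_in_Y hXY hvY hsep w.length w le_rfl x.2 y.2
      obtain ⟨w3, hsub3⟩ := to_induce w2 hY2 x.2 y.2
      exact ⟨w3, fun u hu' => hw u.val (hsub2 u.val (hsub3 u hu'))⟩
    · have hsubset : Sym2.map Subtype.val '' cutSet (G.induce Y) (Subtype.val ⁻¹' A) ⊆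
          cutSet G A := by
        rintro e ⟨e', ⟨he', x, y, rfl, hx, hy⟩, rfl⟩
        rw [SimpleGraph.mem_edgeSet] at he'
        exact ⟨(SimpleGraph.mem_edgeSet G).mpr he', x.val, y.val, rfl, hx, hy⟩
      calc (cutSet (G.induce Y) (Subtype.val ⁻¹' A)).ncard
          = (Sym2.map Subtype.val '' cutSet (G.induce Y) (Subtype.val ⁻¹' A)).ncard :=
            (Set.ncard_image_of_injective _ (Sym2.map.injective Subtype.val_injective)).symm
        _ ≤ (cutSet G A).ncard := Set.ncard_le_ncard hsubset (Set.toFinite _)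
        _ ≤ k := hcut
  · rintro ⟨A', B', hu, hi, hSA, hTB, hSc, hTc, hcut⟩
    by_cases hvA : (⟨v, hvY⟩ : Y) ∈ A'
    · exact construct hXY hXYv hvX hvY hsep S T hSY hTY A' B' hu hi hSA hTB hSc hTc hcut hvA
    · have hvB : (⟨v, hvY⟩ : Y) ∈ B' := by
        rcases Set.eq_univ_iff_forall.mp hu ⟨v, hvY⟩ with h | h
        · exact absurd h hvA
        · exact h
      exact twoSets_swap (construct hXY hXYv hvX hvY hsep T S hTY hSY B' A'
        (Set.union_comm A' B' ▸ hu) (Set.inter_comm A' B' ▸ hi) hTB hSA hTc hSc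
        (cutSet_swap _ A' B' hu hi ▸ hcut) hvB)
end

section
/- Let G be a connected finite simple graph and let X, Y ⊆ V(G) satisfy X ∪ Y = V(G), X ∩ Y = {v}, and no edge of G joins a vertex of X ∖ {v} to a vertex of Y ∖ {v}. Let S, T be disjoint nonempty vertex sets with X ∩ S ≠ ∅, X ∩ T ≠ ∅, Y ∩ S ≠ ∅, and Y ∩ T ≠ ∅. Then for every natural number k, (G,S,T,k) is not a yes-instance of Two-Sets Cut-Uncut. -/
lemma walk_through_v {V : Type*} (G : SimpleGraph V)
    (X Y : Set V) (v : V) (hXY : X ∪ Y = Set.univ)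
    (hsep : ∀ x ∈ X \ {v}, ∀ y ∈ Y \ {v}, ¬ G.Adj x y)
    (hvX : v ∈ X) :
    ∀ {x y : V} (w : G.Walk x y), x ∈ X → y ∉ X → v ∈ w.support := by
  intro x y w
  induction w with
  | nil => intro hx hy; exact absurd hx hy
  | @cons a b c hadj p ih =>
    intro ha hc
    by_cases hb : b ∈ X
    · exact List.mem_cons_of_mem _ (ih hb hc)
    · have hbY : b ∈ Y := by
        have := Set.eq_univ_iff_forall.mp hXY b
        rcases this with h1 | h1
        · exact absurd h1 hb
        · exact h1
      by_cases hav : a = v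
      · exact hav ▸ List.mem_cons_self
      · exfalso
        exact hsep a ⟨ha, hav⟩ b ⟨hbY, fun hbv => hb (hbv ▸ hvX)⟩ hadj

theorem stmt13 {V : Type*} [Fintype V] (G : SimpleGraph V) (hG : G.Connected)
    (X Y : Set V) (v : V) (hXY : X ∪ Y = Set.univ) (hXYv : X ∩ Y = {v})
    (hsep : ∀ x ∈ X \ {v}, ∀ y ∈ Y \ {v}, ¬ G.Adj x y)
    (S T : Set V) (hS : S.Nonempty) (hT : T.Nonempty) (hST : Disjoint S T)
    (hXS : (X ∩ S).Nonempty) (hXT : (X ∩ T).Nonempty)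
    (hYS : (Y ∩ S).Nonempty) (hYT : (Y ∩ T).Nonempty) (k : ℕ) :
    ¬ TwoSetsCutUncut G S T k := by
  rintro ⟨A, B, hAB, hABd, hSA, hTB, hSconn, hTconn, _⟩
  have hvX : v ∈ X := (hXYv ▸ (Set.mem_singleton v) : v ∈ X ∩ Y).1
  have hvY : v ∈ Y := (hXYv ▸ (Set.mem_singleton v) : v ∈ X ∩ Y).2
  -- v ∈ A
  have hvA : v ∈ A := by
    obtain ⟨xs, hxsX, hxsS⟩ := hXS
    obtain ⟨ys, hysY, hysS⟩ := hYS
    by_cases hysX : ys ∈ X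
    · have : ys = v := by
        have : ys ∈ X ∩ Y := ⟨hysX, hysY⟩
        rwa [hXYv] at this
      exact this ▸ hSA hysS
    · obtain ⟨w, hw⟩ := hSconn xs hxsS ys hysS
      exact hw v (walk_through_v G X Y v hXY hsep hvX w hxsX hysX)
  have hvB : v ∈ B := by
    obtain ⟨xt, hxtX, hxtT⟩ := hXT
    obtain ⟨yt, hytY, hytT⟩ := hYT
    by_cases hytX : yt ∈ X
    · have : yt = v := by
        have : yt ∈ X ∩ Y := ⟨hytX, hytY⟩
        rwa [hXYv] at this
      exact this ▸ hTB hytT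
    · obtain ⟨w, hw⟩ := hTconn xt hxtT yt hytT
      exact hw v (walk_through_v G X Y v hXY hsep hvX w hxtX hytX)
  have : v ∈ A ∩ B := ⟨hvA, hvB⟩
  rw [hABd] at this
  exact this
end
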